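/- arXiv:0811.3990 — 7 statements merged into one kernel-verified Lean document; each statement's English description precedes it below -/
import Mathlib

section
/- Let A be an infinite generating set for a group G, and for r ≥ 0 let S_A(r) = {x ∈ G : ℓ_A(x) = r} and L_A(r) = |S_A(r)|. If r > 1 and S_A(r) is finite, then S_A(r') is empty for all r' > r. -/
noncomputable def wordLength {G : Type*} [Group G] (A : Set G) (x : G) : ℕ :=
  sInf {n : ℕ | ∃ l : List G, l.length = n ∧ (∀ g ∈ l, g ∈ A ∪ A⁻¹) ∧ l.prod = x}

section aux

variable {G : Type*} [Group G] {A : Set G}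

lemma wl_set_nonempty (hA : Subgroup.closure A = ⊤) (x : G) :
    {n : ℕ | ∃ l : List G, l.length = n ∧ (∀ g ∈ l, g ∈ A ∪ A⁻¹) ∧ l.prod = x}.Nonempty := by
  have hx : x ∈ Submonoid.closure (A ∪ A⁻¹) := by
    rw [← Subgroup.closure_toSubmonoid, hA]; trivial
  obtain ⟨l, hl, hp⟩ := Submonoid.exists_list_of_mem_closure hx
  exact ⟨l.length, l, rfl, hl, hp⟩

lemma exists_min_list (hA : Subgroup.closure A = ⊤) (x : G) :
    ∃ l : List G, l.length = wordLength A x ∧ (∀ g ∈ l, g ∈ A ∪ A⁻¹) ∧ l.prod = x :=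
  Nat.sInf_mem (wl_set_nonempty hA x)

lemma wl_le (l : List G) (hl : ∀ g ∈ l, g ∈ A ∪ A⁻¹) :
    wordLength A l.prod ≤ l.length :=
  Nat.sInf_le ⟨l, rfl, hl, rfl⟩

lemma wl_mul_le (hA : Subgroup.closure A = ⊤) (x y : G) :
    wordLength A (x * y) ≤ wordLength A x + wordLength A y := by
  obtain ⟨l, hl1, hl2, hl3⟩ := exists_min_list hA x
  obtain ⟨m, hm1, hm2, hm3⟩ := exists_min_list hA y
  have := wl_le (A := A) (l ++ m) (by
    intro g hg
    rcases List.mem_append.mp hg with h | h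
    exacts [hl2 g h, hm2 g h])
  simpa [hl1, hm1, hl3, hm3] using this

lemma wl_letter {b : G} (hb : b ∈ A ∪ A⁻¹) : wordLength A b ≤ 1 := by
  simpa using wl_le [b] (by simpa using hb)

lemma wl_letter_inv {b : G} (hb : b ∈ A ∪ A⁻¹) : wordLength A b⁻¹ ≤ 1 := by
  apply wl_letter
  rcases hb with h | h
  · exact Or.inr (by simpa using h)
  · exact Or.inl (by simpa using h)

/-- Split a geodesic at position `k`. -/
lemma wl_split (hA : Subgroup.closure A = ⊤) {x : G} {n : ℕ}
    (hx : wordLength A x = n) (k : ℕ) (hk : k ≤ n) :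
    ∃ p q : G, wordLength A p = k ∧ wordLength A q = n - k ∧ x = p * q := by
  obtain ⟨l, hl1, hl2, hl3⟩ := exists_min_list hA x
  rw [hx] at hl1
  set p := (l.take k).prod with hp
  set q := (l.drop k).prod with hq
  have hpq : p * q = x := by rw [hp, hq, List.prod_take_mul_prod_drop, hl3]
  have hple : wordLength A p ≤ k := by
    have := wl_le (A := A) (l.take k) (fun g hg => hl2 g (List.take_subset _ _ hg))
    simpa [List.length_take, hl1, Nat.min_def, hk] using this
  have hqle : wordLength A q ≤ n - k := by
    have := wl_le (A := A) (l.drop k) (fun g hg => hl2 g (List.drop_subset _ _ hg))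
    simpa [List.length_drop, hl1] using this
  have hsum : n ≤ wordLength A p + wordLength A q := by
    have := wl_mul_le hA p q
    rw [hpq, hx] at this
    exact this
  exact ⟨p, q, by omega, by omega, hpq.symm⟩

/-- Nonemptiness descends. -/
lemma wl_step_down (hA : Subgroup.closure A = ⊤) {x : G} {n : ℕ}
    (hx : wordLength A x = n + 1) : ∃ z : G, wordLength A z = n := by
  obtain ⟨p, q, hp, -, -⟩ := wl_split hA hx n (by omega)
  exact ⟨p, hp⟩

/-- Key lemma: if the sphere of radius `n ≥ 1` is finite, so is the sphere of radius `n+1`. -/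
lemma wl_finite_step (hA : Subgroup.closure A = ⊤) {n : ℕ} (hn : 1 ≤ n)
    (hfin : {x : G | wordLength A x = n}.Finite) :
    {x : G | wordLength A x = n + 1}.Finite := by
  classical
  by_contra hcon
  replace hcon : Set.Infinite {x : G | wordLength A x = n + 1} := hcon
  set S1 : Set G := {x : G | wordLength A x = n + 1} with hS1
  set S0 : Set G := {x : G | wordLength A x = n} with hS0
  have hdec : ∀ y : S1, ∃ z : S0, ∃ c : G, wordLength A c ≤ 1 ∧ (y : G) = (z : G) * c := by
    rintro ⟨y, hy⟩
    obtain ⟨z, c, hz, hc, hzc⟩ := wl_split hA hy n (by omega)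
    exact ⟨⟨z, hz⟩, c, by omega, hzc⟩
  choose f c hc hyc using hdec
  have : Infinite S1 := Set.infinite_coe_iff.mpr hcon
  have : Finite S0 := hfin.to_subtype
  obtain ⟨z, hzfib⟩ := Finite.exists_infinite_fiber f
  obtain ⟨a, p, ha, hp, hap⟩ := wl_split hA z.2 1 (by omega)
  have hmap : ∀ y : (f ⁻¹' {z}), (a⁻¹ * ((y : S1) : G)) ∈ S0 := by
    rintro ⟨y, hy⟩
    have hyz : f y = z := hy
    have h1 : (y : G) = a * (p * c y) := by
      rw [hyc y, hyz, hap, mul_assoc]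
    have hupper : wordLength A (a⁻¹ * (y : G)) ≤ n := by
      have : a⁻¹ * (y : G) = p * c y := by rw [h1]; group
      rw [this]
      calc wordLength A (p * c y) ≤ wordLength A p + wordLength A (c y) := wl_mul_le hA _ _
        _ ≤ (n - 1) + 1 := by exact Nat.add_le_add hp.le (hc y)
        _ = n := by omega
    have hlower : n ≤ wordLength A (a⁻¹ * (y : G)) := by
      have h2 : wordLength A (y : G) ≤ wordLength A a + wordLength A (a⁻¹ * (y : G)) := by
        have := wl_mul_le hA a (a⁻¹ * (y : G))
        simpa [← mul_assoc] using this
      have h3 : wordLength A (y : G) = n + 1 := y.2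
      omega
    exact le_antisymm hupper hlower
  have hinj : Function.Injective (fun y : (f ⁻¹' {z}) => (⟨a⁻¹ * ((y : S1) : G), hmap y⟩ : S0)) := by
    rintro y₁ y₂ h
    have := congrArg (fun w : S0 => a * (w : G)) h
    simp only [← mul_assoc, mul_inv_cancel, one_mul] at this
    exact Subtype.ext (Subtype.ext this)
  have : Infinite S0 := Infinite.of_injective _ hinj
  exact not_finite S0

end aux

theorem stmt5 {G : Type*} [Group G] (A : Set G) (hA : Subgroup.closure A = ⊤)
    (hinf : A.Infinite) (r : ℕ) (hr : 1 < r)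
    (hfin : {x : G | wordLength A x = r}.Finite) :
    ∀ r' : ℕ, r < r' → {x : G | wordLength A x = r'} = ∅ := by
  have hfin1 : {x : G | wordLength A x = r + 1}.Finite := wl_finite_step hA (by omega) hfin
  have hempty : {x : G | wordLength A x = r + 1} = ∅ := by
    by_contra h
    obtain ⟨x, hx⟩ := Set.nonempty_iff_ne_empty.mpr h
    have hfin2 : {x : G | wordLength A x = r + 2}.Finite := by
      have := wl_finite_step hA (n := r + 1) (by omega) hfin1
      exact this
    have hsub : A ⊆ (fun b => x * b) ⁻¹'
        ({y : G | wordLength A y = r} ∪ {y : G | wordLength A y = r + 1} ∪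
          {y : G | wordLength A y = r + 2}) := by
      intro b hb
      have hb' : b ∈ A ∪ A⁻¹ := Or.inl hb
      have hupper : wordLength A (x * b) ≤ r + 2 := by
        have h1 := wl_mul_le hA x b
        have h2 := wl_letter hb'
        have h3 : wordLength A x = r + 1 := hx
        omega
      have hlower : r ≤ wordLength A (x * b) := by
        have h1 := wl_mul_le hA (x * b) b⁻¹
        have h2 := wl_letter_inv hb'
        simp only [mul_inv_cancel_right] at h1
        have h3 : wordLength A x = r + 1 := hx
        omega
      have : wordLength A (x * b) = r ∨ wordLength A (x * b) = r + 1 ∨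
          wordLength A (x * b) = r + 2 := by omega
      simp only [Set.mem_preimage, Set.mem_union, Set.mem_setOf_eq]
      tauto
    have hAfin : A.Finite := by
      apply Set.Finite.subset (Set.Finite.preimage ?_ ((hfin.union hfin1).union hfin2)) hsub
      exact fun a _ b _ h => mul_right_injective x h
    exact hinf hAfin
  have hall : ∀ m, r + 1 ≤ m → {x : G | wordLength A x = m} = ∅ := by
    intro m hm
    induction m, hm using Nat.le_induction with
    | base => exact hempty
    | succ m hm ih =>
      by_contra h
      obtain ⟨x, hx⟩ := Set.nonempty_iff_ne_empty.mpr h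
      obtain ⟨z, hz⟩ := wl_step_down hA hx
      have : z ∈ ({x : G | wordLength A x = m} : Set G) := hz
      rw [ih] at this
      exact this
  intro r' hr'
  exact hall r' (by omega)
end

section
/- Let G₁, G₂ be groups with infinite generating sets A₁, A₂ having phase transitions (r₁, s₁) and (r₂, s₂) respectively. Then the generating set A = (A₁ × {e₂}) ∪ ({e₁} × A₂) of G₁ × G₂ has phase transition (r₁ + r₂, s₁·s₂) with transition set S_{A₁}(r₁) × S_{A₂}(r₂). -/
section Aux

variable {G₁ G₂ : Type*} [Group G₁] [Group G₂]

lemma wordSet_nonempty {G : Type*} [Group G] {A : Set G} (hg : Subgroup.closure A = ⊤)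
    (x : G) :
    {n : ℕ | ∃ l : List G, l.length = n ∧ (∀ g ∈ l, g ∈ A ∪ A⁻¹) ∧ l.prod = x}.Nonempty := by
  have hx : x ∈ (Subgroup.closure A).toSubmonoid := by
    rw [hg]; trivial
  rw [Subgroup.closure_toSubmonoid] at hx
  obtain ⟨l, hl, hprod⟩ := Submonoid.exists_list_of_mem_closure hx
  exact ⟨l.length, l, rfl, hl, hprod⟩

lemma mem_gen_cases {A₁ : Set G₁} {A₂ : Set G₂} {A : Set (G₁ × G₂)}
    (hA : A = (A₁ ×ˢ ({1} : Set G₂)) ∪ (({1} : Set G₁) ×ˢ A₂)) {x : G₁ × G₂}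
    (hx : x ∈ A ∪ A⁻¹) :
    (x.2 = 1 ∧ x.1 ∈ A₁ ∪ A₁⁻¹) ∨ (x.1 = 1 ∧ x.2 ∈ A₂ ∪ A₂⁻¹) := by
  subst hA
  rcases hx with (h | h) | h
  · exact Or.inl ⟨h.2, Or.inl h.1⟩
  · exact Or.inr ⟨h.1, Or.inl h.2⟩
  · rw [Set.mem_inv] at h
    rcases h with h | h
    · refine Or.inl ⟨?_, Or.inr ?_⟩
      · have := h.2; simp only [Prod.fst_inv, Prod.snd_inv, Set.mem_singleton_iff] at this
        rw [← inv_inv x.2, this, inv_one]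
      · exact h.1
    · refine Or.inr ⟨?_, Or.inr ?_⟩
      · have := h.1; simp only [Prod.fst_inv, Set.mem_singleton_iff] at this
        rw [← inv_inv x.1, this, inv_one]
      · exact h.2

lemma split_list {A₁ : Set G₁} {A₂ : Set G₂} {A : Set (G₁ × G₂)}
    (hA : A = (A₁ ×ˢ ({1} : Set G₂)) ∪ (({1} : Set G₁) ×ˢ A₂)) :
    ∀ l : List (G₁ × G₂), (∀ g ∈ l, g ∈ A ∪ A⁻¹) →
      ∃ l₁ : List G₁, ∃ l₂ : List G₂,
        l₁.length + l₂.length ≤ l.length ∧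
        (∀ g ∈ l₁, g ∈ A₁ ∪ A₁⁻¹) ∧ (∀ g ∈ l₂, g ∈ A₂ ∪ A₂⁻¹) ∧
        l₁.prod = l.prod.1 ∧ l₂.prod = l.prod.2 := by
  intro l
  induction l with
  | nil => intro _; exact ⟨[], [], by simp, by simp, by simp, by simp, by simp⟩
  | cons x l ih =>
    intro h
    obtain ⟨l₁, l₂, hlen, hm₁, hm₂, hp₁, hp₂⟩ := ih (fun g hg => h g (List.mem_cons_of_mem _ hg))
    rcases mem_gen_cases hA (h x List.mem_cons_self) with ⟨h2, h1⟩ | ⟨h1, h2⟩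
    · refine ⟨x.1 :: l₁, l₂, ?_, ?_, hm₂, ?_, ?_⟩
      · simp only [List.length_cons]; omega
      · intro g hg
        rcases List.mem_cons.mp hg with rfl | hg
        · exact h1
        · exact hm₁ g hg
      · simp [List.prod_cons, hp₁]
      · simp [List.prod_cons, hp₂, h2]
    · refine ⟨l₁, x.2 :: l₂, ?_, hm₁, ?_, ?_, ?_⟩
      · simp only [List.length_cons]; omega
      · intro g hg
        rcases List.mem_cons.mp hg with rfl | hg
        · exact h2
        · exact hm₂ g hg
      · simp [List.prod_cons, hp₁, h1]
      · simp [List.prod_cons, hp₂]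

lemma prod_map_inl (l : List G₁) :
    (l.map (fun g => ((g : G₁), (1 : G₂)))).prod = (l.prod, 1) := by
  induction l with
  | nil => simp; rfl
  | cons a t ih => simp [ih, Prod.ext_iff]

lemma prod_map_inr (l : List G₂) :
    (l.map (fun g => ((1 : G₁), (g : G₂)))).prod = (1, l.prod) := by
  induction l with
  | nil => simp; rfl
  | cons a t ih => simp [ih, Prod.ext_iff]

lemma wordLength_prod {A₁ : Set G₁} {A₂ : Set G₂}
    (hg₁ : Subgroup.closure A₁ = ⊤) (hg₂ : Subgroup.closure A₂ = ⊤)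
    {A : Set (G₁ × G₂)}
    (hA : A = (A₁ ×ˢ ({1} : Set G₂)) ∪ (({1} : Set G₁) ×ˢ A₂)) (x : G₁ × G₂) :
    wordLength A x = wordLength A₁ x.1 + wordLength A₂ x.2 := by
  obtain ⟨l₁, hlen₁, hm₁, hp₁⟩ := Nat.sInf_mem (wordSet_nonempty hg₁ x.1)
  obtain ⟨l₂, hlen₂, hm₂, hp₂⟩ := Nat.sInf_mem (wordSet_nonempty hg₂ x.2)
  -- upper bound
  have hmemA : (wordLength A₁ x.1 + wordLength A₂ x.2) ∈ {n : ℕ | ∃ l : List (G₁ × G₂), l.length = n ∧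
      (∀ g ∈ l, g ∈ A ∪ A⁻¹) ∧ l.prod = x} := by
    refine ⟨l₁.map (fun g => (g, 1)) ++ l₂.map (fun g => ((1 : G₁), g)), by
      simpa using by rw [hlen₁, hlen₂] ; exact rfl, ?_, ?_⟩
    · intro g hg
      rcases List.mem_append.mp hg with hg | hg
      · obtain ⟨a, ha, rfl⟩ := List.mem_map.mp hg
        rcases hm₁ a ha with h | h
        · exact Or.inl (by rw [hA]; exact Or.inl ⟨h, rfl⟩)
        · refine Or.inr ?_
          rw [Set.mem_inv, hA]
          exact Or.inl ⟨by simpa using h, by simp⟩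
      · obtain ⟨a, ha, rfl⟩ := List.mem_map.mp hg
        rcases hm₂ a ha with h | h
        · exact Or.inl (by rw [hA]; exact Or.inr ⟨rfl, h⟩)
        · refine Or.inr ?_
          rw [Set.mem_inv, hA]
          exact Or.inr ⟨by simp, by simpa using h⟩
    · rw [List.prod_append]
      rw [prod_map_inl, prod_map_inr, hp₁, hp₂]
      simp [Prod.ext_iff]
  have hub : wordLength A x ≤ wordLength A₁ x.1 + wordLength A₂ x.2 :=
    Nat.sInf_le hmemA
  -- lower bound
  have hlb : wordLength A₁ x.1 + wordLength A₂ x.2 ≤ wordLength A x := by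
    obtain ⟨l, hlen, hm, hp⟩ := Nat.sInf_mem (⟨_, hmemA⟩ : Set.Nonempty _)
    obtain ⟨la, lb, hab, hma, hmb, hpa, hpb⟩ := split_list hA l hm
    calc wordLength A₁ x.1 + wordLength A₂ x.2
        ≤ la.length + lb.length := by
          gcongr
          · exact Nat.sInf_le ⟨la, rfl, hma, by rw [hpa, hp]⟩
          · exact Nat.sInf_le ⟨lb, rfl, hmb, by rw [hpb, hp]⟩
      _ ≤ l.length := hab
      _ = wordLength A x := hlen
  omega

end Aux

universe u
theorem stmt10 {G₁ G₂ : Type u} [Group G₁] [Group G₂] (A₁ : Set G₁) (A₂ : Set G₂)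
    (hg₁ : Subgroup.closure A₁ = ⊤) (hg₂ : Subgroup.closure A₂ = ⊤)
    (hi₁ : A₁.Infinite) (hi₂ : A₂.Infinite)
    (r₁ r₂ : ℕ) (s₁ s₂ : Cardinal)
    (hne₁ : {x : G₁ | wordLength A₁ x = r₁}.Nonempty)
    (htop₁ : ∀ r > r₁, {x : G₁ | wordLength A₁ x = r} = ∅)
    (hs₁ : Cardinal.mk {x : G₁ | wordLength A₁ x = r₁} = s₁)
    (hne₂ : {x : G₂ | wordLength A₂ x = r₂}.Nonempty)
    (htop₂ : ∀ r > r₂, {x : G₂ | wordLength A₂ x = r} = ∅)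
    (hs₂ : Cardinal.mk {x : G₂ | wordLength A₂ x = r₂} = s₂)
    (A : Set (G₁ × G₂))
    (hA : A = (A₁ ×ˢ ({1} : Set G₂)) ∪ (({1} : Set G₁) ×ˢ A₂)) :
    {x : G₁ × G₂ | wordLength A x = r₁ + r₂} =
      {x₁ : G₁ | wordLength A₁ x₁ = r₁} ×ˢ {x₂ : G₂ | wordLength A₂ x₂ = r₂} ∧
    {x : G₁ × G₂ | wordLength A x = r₁ + r₂}.Nonempty ∧
    (∀ r > r₁ + r₂, {x : G₁ × G₂ | wordLength A x = r} = ∅) ∧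
    Cardinal.mk {x : G₁ × G₂ | wordLength A x = r₁ + r₂} = s₁ * s₂ := by
  have hwl := wordLength_prod hg₁ hg₂ hA
  have hb₁ : ∀ x : G₁, wordLength A₁ x ≤ r₁ := by
    intro x
    by_contra h
    push_neg at h
    have := htop₁ _ h
    exact absurd (Set.eq_empty_iff_forall_notMem.mp this x) (by simp)
  have hb₂ : ∀ x : G₂, wordLength A₂ x ≤ r₂ := by
    intro x
    by_contra h
    push_neg at h
    have := htop₂ _ h
    exact absurd (Set.eq_empty_iff_forall_notMem.mp this x) (by simp)
  have hset : {x : G₁ × G₂ | wordLength A x = r₁ + r₂} =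
      {x₁ : G₁ | wordLength A₁ x₁ = r₁} ×ˢ {x₂ : G₂ | wordLength A₂ x₂ = r₂} := by
    ext x
    simp only [Set.mem_setOf_eq, Set.mem_prod, hwl x]
    constructor
    · intro h
      have h1 := hb₁ x.1
      have h2 := hb₂ x.2
      omega
    · rintro ⟨h1, h2⟩; omega
  refine ⟨hset, ?_, ?_, ?_⟩
  · obtain ⟨x₁, hx₁⟩ := hne₁
    obtain ⟨x₂, hx₂⟩ := hne₂
    exact ⟨(x₁, x₂), by rw [hset]; exact ⟨hx₁, hx₂⟩⟩
  · intro r hr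
    ext x
    simp only [Set.mem_setOf_eq, Set.mem_empty_iff_false, iff_false]
    rw [hwl x]
    have := hb₁ x.1
    have := hb₂ x.2
    omega
  · rw [hset, ← hs₁, ← hs₂]
    rw [Cardinal.mk_congr (Equiv.Set.prod _ _), Cardinal.mk_prod,
      Cardinal.lift_id, Cardinal.lift_id]
end

section
/- Let m be a positive integer and A = {1} ∪ {m, 2m, 3m, ...} ⊆ ℤ, a generating set of the additive group ℤ. Then L_A(r) = ∞ for 1 ≤ r ≤ ⌊m/2⌋ + 1 and L_A(r) = 0 for r > ⌊m/2⌋ + 1. -/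
noncomputable def addWordLength {G : Type*} [AddGroup G] (A : Set G) (x : G) : ℕ :=
  sInf {n : ℕ | ∃ l : List G, l.length = n ∧ (∀ g ∈ l, g ∈ A ∪ (-A)) ∧ l.sum = x}

/-- Key structural lemma: any word over `A ∪ -A` has sum congruent mod `m` to a
small integer `t`. -/
lemma stmt15_key (m : ℕ) (A : Set ℤ)
    (hA : A = {1} ∪ {n : ℤ | ∃ k : ℕ, 1 ≤ k ∧ n = (k : ℤ) * m}) :
    ∀ l : List ℤ, (∀ g ∈ l, g ∈ A ∪ (-A)) →
      ∃ t : ℤ, (m : ℤ) ∣ (l.sum - t) ∧ |t| ≤ l.length ∧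
        (t = l.sum ∨ |t| + 1 ≤ l.length) := by
  intro l
  induction l with
  | nil => intro _; exact ⟨0, by simp⟩
  | cons g l ih =>
    intro h
    obtain ⟨t, hdvd, hle, hcase⟩ := ih (fun x hx => h x (List.mem_cons_of_mem _ hx))
    have hg := h g (List.mem_cons_self)
    have hclass : (g = 1 ∨ g = -1) ∨ (m : ℤ) ∣ g := by
      rcases hg with hg | hg
      · rw [hA] at hg
        rcases hg with hg | ⟨k, hk, rfl⟩
        · exact Or.inl (Or.inl hg)
        · exact Or.inr ⟨k, by ring⟩
      · rw [Set.mem_neg, hA] at hg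
        rcases hg with hg | ⟨k, hk, hkm⟩
        · simp only [Set.mem_singleton_iff] at hg
          exact Or.inl (Or.inr (by linarith))
        · exact Or.inr ⟨-k, by linear_combination -hkm⟩
    rcases hclass with hg1 | hgm
    · -- g = ±1 : use t + g
      have habsg : |g| = 1 := by rcases hg1 with rfl | rfl <;> simp
      refine ⟨t + g, ?_, ?_, ?_⟩
      · have : (g :: l).sum - (t + g) = l.sum - t := by
          rw [List.sum_cons]; ring
        rw [this]; exact hdvd
      · have hlen : ((g :: l).length : ℤ) = (l.length : ℤ) + 1 := by
          push_cast [List.length_cons]; ring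
        calc |t + g| ≤ |t| + |g| := abs_add_le _ _
          _ = |t| + 1 := by rw [habsg]
          _ ≤ (l.length : ℤ) + 1 := by linarith
          _ = ((g :: l).length : ℤ) := hlen.symm
      · have hlen : ((g :: l).length : ℤ) = (l.length : ℤ) + 1 := by
          push_cast [List.length_cons]; ring
        rcases hcase with hc | hc
        · left; rw [List.sum_cons]; omega
        · right
          calc |t + g| + 1 ≤ |t| + |g| + 1 := by linarith [abs_add_le t g]
            _ = |t| + 1 + 1 := by rw [habsg]
            _ ≤ (l.length : ℤ) + 1 := by linarith
            _ = ((g :: l).length : ℤ) := hlen.symm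
    · -- g is a multiple of m : keep t
      refine ⟨t, ?_, ?_, ?_⟩
      · have : (g :: l).sum - t = g + (l.sum - t) := by
          rw [List.sum_cons]; ring
        rw [this]; exact dvd_add hgm hdvd
      · have hlen : ((g :: l).length : ℤ) = (l.length : ℤ) + 1 := by
          push_cast [List.length_cons]; ring
        rw [hlen]; linarith
      · right
        have hlen : ((g :: l).length : ℤ) = (l.length : ℤ) + 1 := by
          push_cast [List.length_cons]; ring
        rw [hlen]; linarith

/-- Upper bound: can represent `q*m + s` with at most `m/2 + 1` letters when
`|s| ≤ m/2`. -/
lemma stmt15_build (m : ℕ) (hm : 1 ≤ m) (A : Set ℤ)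
    (hA : A = {1} ∪ {n : ℤ | ∃ k : ℕ, 1 ≤ k ∧ n = (k : ℤ) * m})
    (q s : ℤ) (hs : |s| ≤ ((m / 2 : ℕ) : ℤ)) :
    ∃ l : List ℤ, (∀ g ∈ l, g ∈ A ∪ (-A)) ∧ l.sum = q * m + s ∧
      l.length ≤ m / 2 + 1 := by
  classical
  refine ⟨(if q = 0 then [] else [q * m]) ++
      (if 0 ≤ s then List.replicate s.toNat 1 else List.replicate (-s).toNat (-1)),
      ?_, ?_, ?_⟩
  · intro g hg
    rw [List.mem_append] at hg
    rcases hg with hg | hg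
    · by_cases hq : q = 0
      · simp [hq] at hg
      · simp only [hq, if_false, List.mem_singleton] at hg
        subst hg
        rcases lt_or_gt_of_ne hq with hq' | hq'
        · right
          rw [Set.mem_neg, hA]
          right
          exact ⟨(-q).toNat, by omega, by
            rw [Int.toNat_of_nonneg (by omega : (0:ℤ) ≤ -q)]; ring⟩
        · left
          rw [hA]
          right
          exact ⟨q.toNat, by omega, by
            rw [Int.toNat_of_nonneg (by omega : (0:ℤ) ≤ q)]⟩
    · by_cases h0 : 0 ≤ s
      · simp only [h0, if_true] at hg
        have := List.eq_of_mem_replicate hg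
        subst this
        left; rw [hA]; left; rfl
      · simp only [h0, if_false] at hg
        have := List.eq_of_mem_replicate hg
        subst this
        right; rw [Set.mem_neg, hA]; left; simp
  · rw [List.sum_append]
    have hsum1 : (if q = 0 then ([] : List ℤ) else [q * m]).sum = q * m := by
      by_cases hq : q = 0 <;> simp [hq]
    have hsum2 : (if 0 ≤ s then List.replicate s.toNat 1 else
        List.replicate (-s).toNat (-1 : ℤ)).sum = s := by
      by_cases h0 : 0 ≤ s
      · rw [if_pos h0, List.sum_replicate, nsmul_eq_mul, mul_one,
          Int.toNat_of_nonneg h0]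
      · rw [if_neg h0, List.sum_replicate, nsmul_eq_mul,
          Int.toNat_of_nonneg (by omega : (0:ℤ) ≤ -s)]
        ring
    rw [hsum1, hsum2]
  · rw [List.length_append]
    have hlen2 : (if 0 ≤ s then List.replicate s.toNat 1 else
        List.replicate (-s).toNat (-1 : ℤ)).length ≤ m / 2 := by
      by_cases h0 : 0 ≤ s
      · rw [if_pos h0, List.length_replicate]
        have := abs_of_nonneg h0
        omega
      · rw [if_neg h0, List.length_replicate]
        have := abs_of_neg (show s < 0 by omega)
        omega
    have hlen1 : (if q = 0 then ([] : List ℤ) else [q * m]).length ≤ 1 := by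
      by_cases hq : q = 0 <;> simp [hq]
    omega

/-- Global upper bound on the word length. -/
lemma stmt15_upper (m : ℕ) (hm : 1 ≤ m) (A : Set ℤ)
    (hA : A = {1} ∪ {n : ℤ | ∃ k : ℕ, 1 ≤ k ∧ n = (k : ℤ) * m}) (x : ℤ) :
    addWordLength A x ≤ m / 2 + 1 := by
  have hdiv : 2 * (m / 2) ≤ m ∧ m ≤ 2 * (m / 2) + 1 := by omega
  set q := x / (m : ℤ) with hqdef
  set s := x % (m : ℤ) with hsdef
  have hm0 : (0 : ℤ) < (m : ℤ) := by exact_mod_cast hm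
  have hs0 : 0 ≤ s := Int.emod_nonneg x (by omega)
  have hs1 : s < m := Int.emod_lt_of_pos x hm0
  have hx : (m : ℤ) * q + s = x := Int.mul_ediv_add_emod x m
  have key : ∃ l : List ℤ, (∀ g ∈ l, g ∈ A ∪ (-A)) ∧ l.sum = x ∧
      l.length ≤ m / 2 + 1 := by
    by_cases hcase : s ≤ ((m / 2 : ℕ) : ℤ)
    · obtain ⟨l, h1, h2, h3⟩ := stmt15_build m hm A hA q s
        (by rw [abs_of_nonneg hs0]; exact hcase)
      exact ⟨l, h1, by rw [h2]; linarith, h3⟩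
    · obtain ⟨l, h1, h2, h3⟩ := stmt15_build m hm A hA (q + 1) (s - m)
        (by
          rw [abs_of_nonpos (by omega)]
          push_cast
          omega)
      exact ⟨l, h1, by rw [h2]; push_cast; linarith, h3⟩
  obtain ⟨l, h1, h2, h3⟩ := key
  calc addWordLength A x ≤ l.length := Nat.sInf_le ⟨l, rfl, h1, h2⟩
    _ ≤ m / 2 + 1 := h3

theorem stmt15 (m : ℕ) (hm : 1 ≤ m)
    (A : Set ℤ) (hA : A = {1} ∪ {n : ℤ | ∃ k : ℕ, 1 ≤ k ∧ n = (k : ℤ) * m}) :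
    AddSubgroup.closure A = ⊤ ∧
    (∀ r : ℕ, 1 ≤ r → r ≤ m / 2 + 1 → {x : ℤ | addWordLength A x = r}.Infinite) ∧
    (∀ r : ℕ, m / 2 + 1 < r → {x : ℤ | addWordLength A x = r} = ∅) := by
  have h1A : (1 : ℤ) ∈ A := by rw [hA]; left; rfl
  refine ⟨?_, ?_, ?_⟩
  · -- closure is everything
    rw [AddSubgroup.eq_top_iff']
    intro x
    have h1 : (1 : ℤ) ∈ AddSubgroup.closure A := AddSubgroup.subset_closure h1A
    have := AddSubgroup.zsmul_mem _ h1 x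
    simpa using this
  · -- infinitely many elements of each length r ∈ [1, m/2 + 1]
    intro r hr1 hr2
    have hdiv : 2 * (m / 2) ≤ m ∧ m ≤ 2 * (m / 2) + 1 := by omega
    apply Set.infinite_of_injective_forall_mem
      (f := fun k : ℕ => ((k : ℤ) + r) * m + ((r : ℤ) - 1))
    · intro a b hab
      simp only at hab
      have hm0 : ((m : ℤ)) ≠ 0 := by exact_mod_cast (by omega : m ≠ 0)
      have : ((a : ℤ) + r) = ((b : ℤ) + r) := by
        have := mul_right_cancel₀ hm0 (by linarith : ((a : ℤ) + r) * m = ((b : ℤ) + r) * m)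
        exact this
      exact_mod_cast by linarith
    · intro k
      simp only [Set.mem_setOf_eq]
      set x : ℤ := ((k : ℤ) + r) * m + ((r : ℤ) - 1) with hxdef
      -- upper bound: an explicit word of length r
      have hub : addWordLength A x ≤ r := by
        apply Nat.sInf_le
        refine ⟨((k + r : ℕ) : ℤ) * m :: List.replicate (r - 1) 1, ?_, ?_, ?_⟩
        · simp [List.length_cons, List.length_replicate]; omega
        · intro g hg
          rcases List.mem_cons.mp hg with rfl | hg
          · left; rw [hA]; right; exact ⟨k + r, by omega, rfl⟩
          · have := List.eq_of_mem_replicate hg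
            subst this
            exact Or.inl h1A
        · rw [List.sum_cons, List.sum_replicate]
          rw [hxdef]
          rw [nsmul_eq_mul, mul_one, Nat.cast_sub hr1]
          push_cast
          ring
      -- lower bound
      have hlb : r ≤ addWordLength A x := by
        apply le_csInf
        · exact ⟨r, ((k + r : ℕ) : ℤ) * m :: List.replicate (r - 1) 1, by
            simp [List.length_cons, List.length_replicate]; omega, by
            intro g hg
            rcases List.mem_cons.mp hg with rfl | hg
            · left; rw [hA]; right; exact ⟨k + r, by omega, rfl⟩
            · have := List.eq_of_mem_replicate hg
              subst this
              exact Or.inl h1A, by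
            rw [List.sum_cons, List.sum_replicate, hxdef]
            rw [nsmul_eq_mul, mul_one, Nat.cast_sub hr1]
            push_cast
            ring⟩
        · rintro n ⟨l, hlen, hmem, hsum⟩
          obtain ⟨t, hdvd, hle, hcase⟩ := stmt15_key m A hA l hmem
          rw [hsum] at hdvd hcase
          rw [hlen] at hle hcase
          have hxr : (r : ℤ) ≤ x := by
            have hm1 : (1 : ℤ) ≤ m := by exact_mod_cast hm
            have h1 : ((k : ℤ) + r) * 1 ≤ ((k : ℤ) + r) * m :=
              mul_le_mul_of_nonneg_left hm1 (by positivity)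
            rw [hxdef]
            nlinarith
          rcases hcase with hc | hc
          · -- t = x, so n ≥ |x| ≥ r
            rw [hc] at hle
            have : (r : ℤ) ≤ (n : ℤ) := le_trans hxr (le_trans (le_abs_self x) hle)
            exact_mod_cast this
          · -- |t| + 1 ≤ n and t ≡ r - 1 mod m
            have hdvd2 : (m : ℤ) ∣ (t - ((r : ℤ) - 1)) := by
              have hd2 : (m : ℤ) ∣ (x - ((r : ℤ) - 1)) := ⟨(k : ℤ) + r, by rw [hxdef]; ring⟩
              have h3 := dvd_sub hd2 hdvd
              rwa [show x - ((r : ℤ) - 1) - (x - t) = t - ((r : ℤ) - 1) by ring] at h3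
            obtain ⟨c, hc2⟩ := hdvd2
            have h2r : 2 * ((r : ℤ) - 1) ≤ m := by
              have : r - 1 ≤ m / 2 := by omega
              have : ((r : ℤ)) - 1 ≤ ((m / 2 : ℕ) : ℤ) := by
                push_cast
                omega
              have hdd : 2 * ((m / 2 : ℕ) : ℤ) ≤ (m : ℤ) := by
                push_cast
                omega
              linarith
            have habs : (r : ℤ) - 1 ≤ |t| := by
              rcases le_or_gt 0 c with h0 | h0
              · have : 0 ≤ (m : ℤ) * c := mul_nonneg (by positivity) h0
                have ht : (r : ℤ) - 1 ≤ t := by linarith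
                linarith [le_abs_self t]
              · have hc1 : c ≤ -1 := by omega
                have hm1 : (1 : ℤ) ≤ m := by exact_mod_cast hm
                have : (m : ℤ) * c ≤ (m : ℤ) * (-1) :=
                  mul_le_mul_of_nonneg_left hc1 (by positivity)
                have ht : t ≤ (r : ℤ) - 1 - m := by linarith
                have : (r : ℤ) - 1 ≤ -t := by linarith
                linarith [neg_abs_le t]
            have : (r : ℤ) ≤ (n : ℤ) := by linarith
            exact_mod_cast this
      omega
  · -- lengths beyond m/2 + 1 never occur
    intro r hr
    rw [Set.eq_empty_iff_forall_notMem]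
    intro x hx
    simp only [Set.mem_setOf_eq] at hx
    have := stmt15_upper m hm A hA x
    omega
end

section
/- Let r ≥ 1 and let A ⊆ ℤʳ be the set of lattice points with at most one nonzero coordinate (and that coordinate arbitrary in ℤ). Then A generates ℤʳ, ℓ_A(x) equals the number of nonzero coordinates of x, and the phase transition of A is (r, ∞) with transition set {x ∈ ℤʳ : all coordinates of x are nonzero}. -/
lemma single_mem {r : ℕ} {A : Set (Fin r → ℤ)}
    (hA : A = {x : Fin r → ℤ | ∃ i : Fin r, ∀ j : Fin r, j ≠ i → x j = 0})
    (i : Fin r) (c : ℤ) : Pi.single i c ∈ A := by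
  rw [hA]
  exact ⟨i, fun j hj => by simp [Pi.single_apply, hj]⟩

lemma sub_card {r : ℕ} (l : List (Fin r → ℤ))
    (h : ∀ g ∈ l, ∃ i : Fin r, ∀ j : Fin r, j ≠ i → g j = 0) :
    (Finset.univ.filter fun i : Fin r => l.sum i ≠ 0).card ≤ l.length := by
  induction l with
  | nil => simp
  | cons g l ih =>
    obtain ⟨i, hi⟩ := h g List.mem_cons_self
    have hsub : (Finset.univ.filter fun j : Fin r => (g :: l).sum j ≠ 0) ⊆
        insert i (Finset.univ.filter fun j : Fin r => l.sum j ≠ 0) := by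
      intro j hj
      rw [Finset.mem_filter] at hj
      simp only [List.sum_cons, Pi.add_apply] at hj
      by_cases hji : j = i
      · exact Finset.mem_insert.2 (Or.inl hji)
      · refine Finset.mem_insert.2 (Or.inr ?_)
        simp only [Finset.mem_filter, Finset.mem_univ, true_and]
        intro hz
        exact hj.2 (by rw [hi j hji, hz, add_zero])
    calc (Finset.univ.filter fun j : Fin r => (g :: l).sum j ≠ 0).card
        ≤ (insert i (Finset.univ.filter fun j : Fin r => l.sum j ≠ 0)).card :=
          Finset.card_le_card hsub
      _ ≤ (Finset.univ.filter fun j : Fin r => l.sum j ≠ 0).card + 1 :=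
          Finset.card_insert_le _ _
      _ ≤ l.length + 1 := by
          exact Nat.add_le_add_right (ih fun g hg => h g (List.mem_cons_of_mem _ hg)) 1
      _ = (g :: l).length := rfl

lemma wl_eq {r : ℕ} {A : Set (Fin r → ℤ)}
    (hA : A = {x : Fin r → ℤ | ∃ i : Fin r, ∀ j : Fin r, j ≠ i → x j = 0})
    (x : Fin r → ℤ) :
    addWordLength A x = (Finset.univ.filter fun i : Fin r => x i ≠ 0).card := by
  set s := Finset.univ.filter fun i : Fin r => x i ≠ 0 with hs
  have hmem : s.card ∈ {n : ℕ | ∃ l : List (Fin r → ℤ),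
      l.length = n ∧ (∀ g ∈ l, g ∈ A ∪ (-A)) ∧ l.sum = x} := by
    refine ⟨s.toList.map fun i => Pi.single i (x i), ?_, ?_, ?_⟩
    · simp
    · intro g hg
      simp only [List.mem_map] at hg
      obtain ⟨i, _, rfl⟩ := hg
      exact Set.mem_union_left _ (single_mem hA i (x i))
    · have key : ((s.toList.map fun i => Pi.single i (x i)).sum : Fin r → ℤ)
          = ∑ i ∈ s, Pi.single i (x i) := by
        rw [← Multiset.sum_coe, ← Multiset.map_coe, Finset.coe_toList, Finset.sum]
      have key2 : (∑ i ∈ s, Pi.single i (x i) : Fin r → ℤ)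
          = ∑ i : Fin r, Pi.single i (x i) := by
        refine Finset.sum_subset (Finset.subset_univ s) ?_
        intro i _ hi
        have : x i = 0 := by
          by_contra h
          exact hi (by simp [hs, h])
        simp [this]
      rw [key, key2, Finset.univ_sum_single]
  apply le_antisymm
  · exact Nat.sInf_le hmem
  · refine le_csInf ⟨_, hmem⟩ ?_
    rintro n ⟨l, rfl, hl, rfl⟩
    apply sub_card
    intro g hg
    rcases hl g hg with h | h
    · rw [hA] at h; exact h
    · have : -g ∈ A := by simpa [Set.mem_neg] using h
      rw [hA] at this
      obtain ⟨i, hi⟩ := this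
      exact ⟨i, fun j hj => by have := hi j hj; simpa using neg_eq_zero.mp (by simpa using this)⟩

theorem stmt16 (r : ℕ) (hr : 1 ≤ r)
    (A : Set (Fin r → ℤ))
    (hA : A = {x : Fin r → ℤ | ∃ i : Fin r, ∀ j : Fin r, j ≠ i → x j = 0}) :
    AddSubgroup.closure A = ⊤ ∧
    (∀ x : Fin r → ℤ,
      addWordLength A x = (Finset.univ.filter fun i : Fin r => x i ≠ 0).card) ∧
    (∀ r' : ℕ, r < r' → {x : Fin r → ℤ | addWordLength A x = r'} = ∅) ∧
    {x : Fin r → ℤ | addWordLength A x = r} = {x : Fin r → ℤ | ∀ i, x i ≠ 0} ∧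
    {x : Fin r → ℤ | addWordLength A x = r}.Infinite := by
  have hwl := wl_eq hA
  have hset : {x : Fin r → ℤ | addWordLength A x = r} = {x : Fin r → ℤ | ∀ i, x i ≠ 0} := by
    ext x
    simp only [Set.mem_setOf_eq, hwl x]
    constructor
    · intro h i
      have : (Finset.univ.filter fun i : Fin r => x i ≠ 0) = Finset.univ := by
        apply Finset.eq_univ_of_card
        simpa using h
      intro hz
      have := Finset.mem_filter.1 (this ▸ Finset.mem_univ i)
      exact this.2 hz
    · intro h
      have : (Finset.univ.filter fun i : Fin r => x i ≠ 0) = Finset.univ :=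
        Finset.filter_true_of_mem fun i _ => h i
      simp [this]
  refine ⟨?_, hwl, ?_, hset, ?_⟩
  · rw [eq_top_iff]
    intro x _
    have : x = ∑ i : Fin r, Pi.single i (x i) := (Finset.univ_sum_single x).symm
    rw [this]
    exact AddSubgroup.sum_mem _ fun i _ =>
      AddSubgroup.subset_closure (single_mem hA i (x i))
  · intro r' hr'
    ext x
    simp only [Set.mem_setOf_eq, Set.mem_empty_iff_false, iff_false]
    intro h
    rw [hwl x] at h
    have : (Finset.univ.filter fun i : Fin r => x i ≠ 0).card ≤ r := by
      simpa using Finset.card_filter_le Finset.univ fun i : Fin r => x i ≠ 0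
    omega
  · rw [hset]
    apply Set.infinite_of_injective_forall_mem
      (f := fun n : ℕ => (fun _ => (n : ℤ) + 1 : Fin r → ℤ))
    · intro a b hab
      have := congrFun hab ⟨0, hr⟩
      simpa using this
    · intro n i
      simp only [Set.mem_setOf_eq]
      intro i
      omega
end

section
/- Let W be a nonempty finite set of positive integers, and let A = ℕ \ W (the positive integers not in W). Then A generates the additive group ℤ and S_A(2) = W ∪ (−W), so the pair (ℤ, A) has phase transition (2, 2|W|). -/
theorem stmt17 (W : Set ℤ) (hWpos : W ⊆ {n : ℤ | 0 < n}) (hWfin : W.Finite)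
    (hWne : W.Nonempty)
    (A : Set ℤ) (hA : A = {n : ℤ | 0 < n} \ W) :
    AddSubgroup.closure A = ⊤ ∧
    {x : ℤ | addWordLength A x = 2} = W ∪ (-W) ∧
    (∀ r : ℕ, 2 < r → {x : ℤ | addWordLength A x = r} = ∅) ∧
    Nat.card {x : ℤ | addWordLength A x = 2} = 2 * W.ncard := by
  obtain ⟨M, hM⟩ := hWfin.bddAbove
  set m : ℤ := max M 0 + 1 with hm
  have hmpos : 0 < m := by
    have : (0:ℤ) ≤ max M 0 := le_max_right _ _
    omega
  have hmW : ∀ w ∈ W, w < m := by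
    intro w hw
    have := hM hw
    have : M ≤ max M 0 := le_max_left _ _
    omega
  have hmA : ∀ k : ℤ, 0 ≤ k → m + k ∈ A := by
    intro k hk
    rw [hA]
    refine ⟨by simpa using by omega, fun h => ?_⟩
    have := hmW _ h
    omega
  -- membership in A
  have memA : ∀ x : ℤ, x ∈ A ↔ 0 < x ∧ x ∉ W := by
    intro x; rw [hA]; simp [Set.mem_diff]
  -- trichotomy
  have tri : ∀ x : ℤ, x = 0 ∨ x ∈ A ∪ (-A) ∨ x ∈ W ∪ (-W) := by
    intro x
    rcases lt_trichotomy x 0 with h | h | h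
    · by_cases hw : -x ∈ W
      · exact Or.inr (Or.inr (Or.inr (by simpa [Set.mem_neg] using hw)))
      · refine Or.inr (Or.inl (Or.inr ?_))
        rw [Set.mem_neg, memA]
        exact ⟨by omega, hw⟩
    · exact Or.inl h
    · by_cases hw : x ∈ W
      · exact Or.inr (Or.inr (Or.inl hw))
      · exact Or.inr (Or.inl (Or.inl ((memA x).mpr ⟨h, hw⟩)))
  -- the defining sets
  set S : ℤ → Set ℕ := fun x =>
    {n : ℕ | ∃ l : List ℤ, l.length = n ∧ (∀ g ∈ l, g ∈ A ∪ (-A)) ∧ l.sum = x} with hS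
  have hS0 : ∀ x : ℤ, 0 ∈ S x ↔ x = 0 := by
    intro x
    constructor
    · rintro ⟨l, hl, -, hsum⟩
      rw [List.length_eq_zero_iff] at hl
      subst hl; simpa using hsum.symm
    · rintro rfl; exact ⟨[], by simp, by simp, by simp⟩
  have hS1 : ∀ x : ℤ, 1 ∈ S x ↔ x ∈ A ∪ (-A) := by
    intro x
    constructor
    · rintro ⟨l, hl, hmem, hsum⟩
      rw [List.length_eq_one_iff] at hl
      obtain ⟨a, rfl⟩ := hl
      simp at hsum
      subst hsum
      exact hmem a (by simp)
    · intro hx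
      exact ⟨[x], by simp, by simpa using hx, by simp⟩
  have hS2 : ∀ x : ℤ, x ∈ W ∪ (-W) → 2 ∈ S x := by
    rintro x (hx | hx)
    · have hxpos : 0 < x := hWpos hx
      refine ⟨[x + m, -m], by simp, ?_, by simp⟩
      intro g hg
      simp at hg
      rcases hg with rfl | rfl
      · exact Or.inl (by simpa [add_comm] using hmA x (le_of_lt hxpos))
      · exact Or.inr (by simpa [Set.mem_neg] using hmA 0 le_rfl)
    · rw [Set.mem_neg] at hx
      have hxneg : 0 < -x := hWpos hx
      refine ⟨[x - m, m], by simp, ?_, by simp⟩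
      intro g hg
      simp at hg
      rcases hg with rfl | rfl
      · refine Or.inr ?_
        rw [Set.mem_neg]
        have : -(x - m) = m + (-x) := by ring
        rw [this]
        exact hmA (-x) (le_of_lt hxneg)
      · exact Or.inl (by simpa using hmA 0 le_rfl)
  -- word length computations
  have awl0 : addWordLength A 0 = 0 :=
    Nat.sInf_eq_zero.mpr (Or.inl ((hS0 0).mpr rfl))
  have awl1 : ∀ x : ℤ, x ∈ A ∪ (-A) → addWordLength A x = 1 := by
    intro x hx
    have hxne : x ≠ 0 := by
      rcases hx with hx | hx
      · have := ((memA x).mp hx).1; omega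
      · rw [Set.mem_neg, memA] at hx; omega
    have h1 : 1 ∈ S x := (hS1 x).mpr hx
    have hle : sInf (S x) ≤ 1 := Nat.sInf_le h1
    have hne0 : sInf (S x) ≠ 0 := by
      intro h
      rcases Nat.sInf_eq_zero.mp h with h' | h'
      · exact hxne ((hS0 x).mp h')
      · rw [h'] at h1; exact h1
    show sInf (S x) = 1
    omega
  have awl2 : ∀ x : ℤ, x ∈ W ∪ (-W) → addWordLength A x = 2 := by
    intro x hx
    have hxW : x ∉ A ∪ (-A) := by
      rcases hx with hx | hx
      · have hxpos : (0:ℤ) < x := hWpos hx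
        rintro (h | h)
        · exact ((memA x).mp h).2 hx
        · rw [Set.mem_neg, memA] at h; omega
      · rw [Set.mem_neg] at hx
        have hxpos : (0:ℤ) < -x := hWpos hx
        rintro (h | h)
        · rw [memA] at h; omega
        · rw [Set.mem_neg, memA] at h; exact h.2 hx
    have hxne : x ≠ 0 := by
      rcases hx with hx | hx
      · have : (0:ℤ) < x := hWpos hx; omega
      · rw [Set.mem_neg] at hx; have : (0:ℤ) < -x := hWpos hx; omega
    have h2 : 2 ∈ S x := hS2 x hx
    have hle : sInf (S x) ≤ 2 := Nat.sInf_le h2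
    have hmem : sInf (S x) ∈ S x := Nat.sInf_mem ⟨2, h2⟩
    show sInf (S x) = 2
    by_contra hne2
    have : sInf (S x) = 0 ∨ sInf (S x) = 1 := by omega
    rcases this with h | h <;> rw [h] at hmem
    · exact hxne ((hS0 x).mp hmem)
    · exact hxW ((hS1 x).mp hmem)
  have setEq : {x : ℤ | addWordLength A x = 2} = W ∪ (-W) := by
    ext x
    simp only [Set.mem_setOf_eq]
    constructor
    · intro h
      rcases tri x with rfl | hx | hx
      · rw [awl0] at h; exact absurd h (by norm_num)
      · rw [awl1 x hx] at h; exact absurd h (by norm_num)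
      · exact hx
    · exact awl2 x
  refine ⟨?_, setEq, ?_, ?_⟩
  · -- closure = ⊤
    have h1 : (1:ℤ) ∈ AddSubgroup.closure A := by
      have ha : m ∈ AddSubgroup.closure A :=
        AddSubgroup.subset_closure (by simpa using hmA 0 le_rfl)
      have hb : m + 1 ∈ AddSubgroup.closure A :=
        AddSubgroup.subset_closure (hmA 1 zero_le_one)
      have := AddSubgroup.sub_mem _ hb ha
      simpa using this
    rw [eq_top_iff]
    intro x _
    have := AddSubgroup.zsmul_mem _ h1 x
    simpa using this
  · -- r > 2 empty
    intro r hr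
    ext x
    simp only [Set.mem_setOf_eq, Set.mem_empty_iff_false, iff_false]
    intro h
    rcases tri x with rfl | hx | hx
    · rw [awl0] at h; omega
    · rw [awl1 x hx] at h; omega
    · rw [awl2 x hx] at h; omega
  · -- cardinality
    rw [setEq, Nat.card_coe_set_eq]
    have hdisj : Disjoint W (-W) := by
      rw [Set.disjoint_left]
      intro x hx hx'
      rw [Set.mem_neg] at hx'
      have h1 : (0:ℤ) < x := hWpos hx
      have h2 : (0:ℤ) < -x := hWpos hx'
      omega
    have hWfin' : (-W).Finite := by
      rw [← Set.image_neg_eq_neg]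
      exact hWfin.image _
    rw [Set.ncard_union_eq hdisj hWfin hWfin']
    have : (-W).ncard = W.ncard := by
      rw [← Set.image_neg_eq_neg]
      exact Set.ncard_image_of_injective _ neg_injective
    omega
end

section
/- Let r ≥ 2 and let s be an even positive integer, and let W be any set of s/2 positive integers. Then there exists an infinite set A of positive integers generating the additive group ℤ such that S_A(r) = W ∪ (−W); in particular (ℤ, A) has phase transition (r, s). -/
set_option maxHeartbeats 4000000

namespace PF18

inductive PT where
  | U : ℕ → PT
  | V : ℤ → PT
  | C : ℤ → PT

def scaleOf : PT → ℕ
  | .U j => j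
  | .V w => 2 * w.toNat
  | .C x => 2 * x.toNat + 1

def mcoef (r : ℕ) : PT → ℤ
  | .U _ => 1
  | .V _ => (r : ℤ) - 1
  | .C _ => (r : ℤ) - 2

def spart : PT → ℤ
  | .U _ => 0
  | .V w => w
  | .C x => x

def pval (r : ℕ) (Q : ℤ) (p : PT) : ℤ := mcoef r p * Q ^ scaleOf p + spart p

def pvalid (W : Set ℤ) : PT → Prop
  | .U j => 2 ≤ j
  | .V w => w ∈ W
  | .C x => 0 < x ∧ x ∉ W

def isU : PT → Bool
  | .U _ => true
  | _ => false

def isC : PT → Bool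
  | .C _ => true
  | _ => false

def theA (W : Set ℤ) (r : ℕ) (Q : ℤ) : Set ℤ := {z | ∃ p : PT, pvalid W p ∧ pval r Q p = z}

def sgn (t : Bool × PT) : ℤ := if t.1 then 1 else -1

def sval (r : ℕ) (Q : ℤ) (t : Bool × PT) : ℤ := sgn t * pval r Q t.2

def msum (r : ℕ) (Q : ℤ) (M : Multiset (Bool × PT)) : ℤ := (M.map (sval r Q)).sum

def scount (M : Multiset (Bool × PT)) : ℤ := (M.map sgn).sum

section Lemmas

variable {W : Set ℤ} {B Q : ℤ} {r : ℕ}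

lemma msum_add (M N : Multiset (Bool × PT)) :
    msum r Q (M + N) = msum r Q M + msum r Q N := by
  simp [msum]

lemma abs_sgn (t : Bool × PT) : |sgn t| = 1 := by
  rcases t with ⟨b, p⟩; cases b <;> simp [sgn]

lemma abs_sval (t : Bool × PT) : |sval r Q t| = |pval r Q t.2| := by
  rw [sval, abs_mul, abs_sgn, one_mul]

lemma abs_scount_le (M : Multiset (Bool × PT)) : |scount M| ≤ (M.card : ℤ) := by
  induction M using Multiset.induction with
  | empty => simp [scount]
  | cons a s ih =>
    have h1 : scount (a ::ₘ s) = sgn a + scount s := by simp [scount]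
    calc |scount (a ::ₘ s)| ≤ |sgn a| + |scount s| := by rw [h1]; exact abs_add_le _ _
    _ ≤ 1 + s.card := by rw [abs_sgn]; linarith
    _ = ((a ::ₘ s).card : ℤ) := by simp; ring

lemma abs_msum_le {c : ℤ} (M : Multiset (Bool × PT)) (h : ∀ t ∈ M, |sval r Q t| ≤ c) :
    |msum r Q M| ≤ (M.card : ℤ) * c := by
  induction M using Multiset.induction with
  | empty => simp [msum]
  | cons a s ih =>
    have h1 : msum r Q (a ::ₘ s) = sval r Q a + msum r Q s := by simp [msum]
    have h2 := ih (fun t ht => h t (Multiset.mem_cons_of_mem ht))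
    have h3 := h a (Multiset.mem_cons_self a s)
    calc |msum r Q (a ::ₘ s)| ≤ |sval r Q a| + |msum r Q s| := by rw [h1]; exact abs_add_le _ _
    _ ≤ c + (s.card : ℤ) * c := by linarith
    _ = ((a ::ₘ s).card : ℤ) * c := by simp; ring

lemma scale_ge_two (hWpos : ∀ w ∈ W, 0 < w) {p : PT} (hp : pvalid W p) :
    2 ≤ scaleOf p := by
  cases p with
  | U j => exact hp
  | V w => have := hWpos w hp; simp only [scaleOf]; omega
  | C x => obtain ⟨hx, _⟩ := hp; simp only [scaleOf]; omega

lemma abs_spart_le (hWB : ∀ w ∈ W, 0 < w ∧ w ≤ B) (hBQ : B < Q) (h2Q : (2:ℤ) ≤ Q)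
    {p : PT} (hp : pvalid W p) : |spart p| ≤ Q ^ (scaleOf p - 1) := by
  have h0Q : (0:ℤ) ≤ Q := by linarith
  have h1Q : (1:ℤ) ≤ Q := by linarith
  cases p with
  | U j => simp only [spart, abs_zero]; positivity
  | V w =>
    obtain ⟨hw0, hwB⟩ := hWB w hp
    have h1 : 1 ≤ w.toNat := by omega
    have : |w| = w := abs_of_pos hw0
    rw [spart, this]
    calc w ≤ B := hwB
    _ ≤ Q := by linarith
    _ = Q ^ 1 := (pow_one Q).symm
    _ ≤ Q ^ (2 * w.toNat - 1) := pow_le_pow_right₀ h1Q (by omega)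
    _ = Q ^ (scaleOf (PT.V w) - 1) := by rfl
  | C x =>
    obtain ⟨hx0, _⟩ := hp
    have : |x| = x := abs_of_pos hx0
    rw [spart, this]
    have h1 : (x.toNat : ℤ) < 2 ^ x.toNat := by exact_mod_cast (Nat.lt_two_pow_self (n := x.toNat))
    have h2 : ((2:ℤ)) ^ x.toNat ≤ Q ^ x.toNat := pow_le_pow_left₀ (by norm_num) h2Q _
    have h3 : Q ^ x.toNat ≤ Q ^ (2 * x.toNat) := pow_le_pow_right₀ h1Q (by omega)
    have hx : x = (x.toNat : ℤ) := (Int.toNat_of_nonneg (le_of_lt hx0)).symm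
    have hsc : scaleOf (PT.C x) - 1 = 2 * x.toNat := by simp [scaleOf]
    rw [hsc]
    have hx' : x ≤ (x.toNat : ℤ) := le_of_eq hx
    linarith
  
lemma abs_pval_le (hr : 2 ≤ r) (hWB : ∀ w ∈ W, 0 < w ∧ w ≤ B) (hBQ : B < Q)
    (h2Q : (2:ℤ) ≤ Q) {p : PT} (hp : pvalid W p) :
    |pval r Q p| ≤ (r : ℤ) * Q ^ (scaleOf p) := by
  have h1Q : (1:ℤ) ≤ Q := by linarith
  have hm : |mcoef r p| ≤ (r:ℤ) - 1 := by
    have h2r : (2:ℤ) ≤ (r:ℤ) := by exact_mod_cast hr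
    cases p with
    | U j => simp only [mcoef]; rw [abs_one]; linarith
    | V w => simp only [mcoef]; rw [abs_of_nonneg (by linarith)]
    | C x => simp only [mcoef]; rw [abs_of_nonneg (by linarith)]; linarith
  have hs : |spart p| ≤ Q ^ (scaleOf p - 1) := abs_spart_le hWB hBQ h2Q hp
  have hss : Q ^ (scaleOf p - 1) ≤ Q ^ (scaleOf p) := pow_le_pow_right₀ h1Q (by omega)
  have hqp : (0:ℤ) ≤ Q ^ scaleOf p := by positivity
  calc |pval r Q p| ≤ |mcoef r p * Q ^ scaleOf p| + |spart p| := abs_add_le _ _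
  _ = |mcoef r p| * Q ^ scaleOf p + |spart p| := by rw [abs_mul, abs_of_nonneg hqp]
  _ ≤ ((r:ℤ) - 1) * Q ^ scaleOf p + Q ^ scaleOf p := by
      have := mul_le_mul_of_nonneg_right hm hqp
      linarith
  _ = (r : ℤ) * Q ^ (scaleOf p) := by ring

lemma pval_pos (hr : 2 ≤ r) (hWpos : ∀ w ∈ W, 0 < w) (h2Q : (2:ℤ) ≤ Q)
    {p : PT} (hp : pvalid W p) : 0 < pval r Q p := by
  have hrZ : (2:ℤ) ≤ (r:ℤ) := by exact_mod_cast hr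
  have h0Q : (0:ℤ) < Q := by linarith
  cases p with
  | U j =>
    simp only [pval, mcoef, spart, one_mul, add_zero]
    positivity
  | V w =>
    have hw := hWpos w hp
    have : (0:ℤ) < Q ^ scaleOf (PT.V w) := by positivity
    simp only [pval, mcoef, spart]
    nlinarith
  | C x =>
    obtain ⟨hx, _⟩ := hp
    have : (0:ℤ) < Q ^ scaleOf (PT.C x) := by positivity
    simp only [pval, mcoef, spart]
    nlinarith


lemma isU_iff {p : PT} : isU p = true ↔ ∃ j, p = PT.U j := by
  cases p <;> simp [isU]

lemma isC_iff {p : PT} : isC p = true ↔ ∃ x, p = PT.C x := by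
  cases p <;> simp [isC]

lemma shape_V {p : PT} (h1 : ¬ isU p = true) (h2 : ¬ isC p = true) : ∃ w, p = PT.V w := by
  cases p <;> simp_all [isU, isC]


lemma arith_a0 {a b rr cU cW : ℤ} (hrr : 2 ≤ rr) (hmu : b + a * (rr-1) = 0)
    (ha : |a| ≤ cW) (hb : |b| ≤ cU) (hcard : cU + cW ≤ rr - 1) : a = 0 := by
  by_contra hane
  have h1 : (1:ℤ) ≤ |a| := Int.one_le_abs hane
  have h2 : |b| = |a| * (rr-1) := by
    have hbb : b = -(a * (rr-1)) := by linarith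
    rw [hbb, abs_neg, abs_mul, abs_of_nonneg (by linarith : (0:ℤ) ≤ rr-1)]
  nlinarith

lemma arith_odd {a b rr cU cW ctop crest nn : ℤ} (hrr : 2 ≤ rr) (hane : a ≠ 0)
    (hmu : b + a * (rr-2) = 0) (ha : |a| ≤ cW) (hb : |b| ≤ cU)
    (hcardtop : cU + cW = ctop) (hc : ctop + crest = nn) (hn : nn ≤ rr - 1)
    (hcrest : 0 ≤ crest) (hcU : 0 ≤ cU) (hcW : 0 ≤ cW) : |a| = 1 ∧ crest = 0 := by
  have h1 : (1:ℤ) ≤ |a| := Int.one_le_abs hane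
  have h2 : |b| = |a| * (rr-2) := by
    have hbb : b = -(a * (rr-2)) := by linarith
    rw [hbb, abs_neg, abs_mul, abs_of_nonneg (by linarith : (0:ℤ) ≤ rr-2)]
  constructor
  · nlinarith
  · nlinarith

lemma core (hr : 2 ≤ r) (hB : 1 ≤ B) (hWB : ∀ w ∈ W, 0 < w ∧ w ≤ B)
    (hQ : Q = B + (r:ℤ)^2) :
    ∀ n (M : Multiset (Bool × PT)), M.card = n → n ≤ r - 1 →
      (∀ t ∈ M, pvalid W t.2) → |msum r Q M| ≤ B →
      msum r Q M = 0 ∨ ∃ x : ℤ, 0 < x ∧ x ∉ W ∧ (msum r Q M = x ∨ msum r Q M = -x) := by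
  have hrZ : (2:ℤ) ≤ (r:ℤ) := by exact_mod_cast hr
  have h2Q : (2:ℤ) ≤ Q := by nlinarith
  have h1Q : (1:ℤ) < Q := by linarith
  have h1Q' : (1:ℤ) ≤ Q := by linarith
  have h0Q : (0:ℤ) < Q := by linarith
  have hBQ : B < Q := by nlinarith
  intro n
  induction n using Nat.strong_induction_on with
  | _ n IH =>
    intro M hcard hn hvalid habs
    classical
    rcases eq_or_ne M 0 with rfl | hM0
    · left; simp [msum]
    -- the maximal scale J
    obtain ⟨J, hscale_le, t₁, ht₁M, ht₁J⟩ :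
        ∃ J : ℕ, (∀ t ∈ M, scaleOf t.2 ≤ J) ∧ ∃ t₁ ∈ M, scaleOf t₁.2 = J := by
      obtain ⟨t₀, ht₀⟩ := Multiset.exists_mem_of_ne_zero hM0
      have hFne : ((M.map fun t => scaleOf t.2).toFinset).Nonempty :=
        ⟨scaleOf t₀.2, Multiset.mem_toFinset.2 (Multiset.mem_map_of_mem _ ht₀)⟩
      refine ⟨((M.map fun t => scaleOf t.2).toFinset).max' hFne, ?_, ?_⟩
      · intro t ht
        exact Finset.le_max' _ (scaleOf t.2)
          (Multiset.mem_toFinset.2 (Multiset.mem_map_of_mem (fun t => scaleOf t.2) ht))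
      · have hJmem := Finset.max'_mem _ hFne
        obtain ⟨t₁, ht₁M, ht₁J⟩ := Multiset.mem_map.1 (Multiset.mem_toFinset.1 hJmem)
        exact ⟨t₁, ht₁M, ht₁J⟩
    have hJ2 : 2 ≤ J := by
      rw [← ht₁J]
      exact scale_ge_two (fun w hw => (hWB w hw).1) (hvalid t₁ ht₁M)
    have hQJ : Q ^ J = Q * Q ^ (J - 1) := by
      conv_lhs => rw [show J = (J-1) + 1 by omega]
      rw [pow_succ]; ring
    have hQJ1pos : (0:ℤ) < Q ^ (J-1) := by positivity
    have hQJpos : (0:ℤ) < Q ^ J := by positivity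
    have hBQJ : B ≤ Q ^ (J - 1) := by
      calc B ≤ Q := le_of_lt hBQ
      _ = Q ^ 1 := (pow_one Q).symm
      _ ≤ Q ^ (J-1) := pow_le_pow_right₀ h1Q' (by omega)
    -- split into top and rest, then into shapes; derive all structural facts
    set Mtop := M.filter (fun t => scaleOf t.2 = J) with hMtopdef
    set Mrest := M.filter (fun t => ¬ scaleOf t.2 = J) with hMrestdef
    set MU := Mtop.filter (fun t => isU t.2 = true) with hMUdef
    set MW := Mtop.filter (fun t => ¬ isU t.2 = true) with hMWdef
    have hMsplit : Mtop + Mrest = M := Multiset.filter_add_not _ M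
    have hUWsplit : MU + MW = Mtop := Multiset.filter_add_not _ Mtop
    have hsum : msum r Q M = msum r Q Mtop + msum r Q Mrest := by
      rw [← hMsplit, msum_add]
    have hcards : Mtop.card + Mrest.card = n := by
      rw [← hcard, ← hMsplit, Multiset.card_add]
    have hcardUW : MU.card + MW.card = Mtop.card := by
      rw [← hUWsplit, Multiset.card_add]
    have hnZ : (n:ℤ) ≤ (r:ℤ) - 1 := by omega
    have hcardsZ : (Mtop.card:ℤ) + (Mrest.card:ℤ) = (n:ℤ) := by exact_mod_cast hcards
    have hcardUWZ : (MU.card:ℤ) + (MW.card:ℤ) = (Mtop.card:ℤ) := by exact_mod_cast hcardUW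
    have ht₁top : t₁ ∈ Mtop := Multiset.mem_filter.2 ⟨ht₁M, ht₁J⟩
    have htopcard : 1 ≤ Mtop.card := Multiset.card_pos.2 (fun h => by simp [h] at ht₁top)
    have hrestfacts : ∀ t ∈ Mrest, pvalid W t.2 ∧ scaleOf t.2 ≤ J - 1 := by
      intro t ht
      have htM : t ∈ M := Multiset.mem_of_mem_filter ht
      have htne : ¬ scaleOf t.2 = J := (Multiset.mem_filter.1 ht).2
      have := hscale_le t htM
      exact ⟨hvalid t htM, by omega⟩
    have hMUfacts : ∀ t ∈ MU, (∃ j, t.2 = PT.U j) ∧ scaleOf t.2 = J := by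
      intro t ht
      exact ⟨isU_iff.1 (Multiset.mem_filter.1 ht).2,
        (Multiset.mem_filter.1 (Multiset.mem_of_mem_filter ht)).2⟩
    have hMWfacts : ∀ t ∈ MW, ¬ isU t.2 = true ∧ scaleOf t.2 = J ∧ pvalid W t.2 := by
      intro t ht
      have htop : t ∈ Mtop := Multiset.mem_of_mem_filter ht
      exact ⟨(Multiset.mem_filter.1 ht).2, (Multiset.mem_filter.1 htop).2,
        hvalid t (Multiset.mem_of_mem_filter htop)⟩
    clear_value Mtop Mrest MU MW
    clear hMtopdef hMrestdef hMUdef hMWdef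
    -- bound on the rest
    have hrest_bound : |msum r Q Mrest| ≤ (Mrest.card : ℤ) * ((r:ℤ) * Q ^ (J-1)) := by
      apply abs_msum_le
      intro t ht
      obtain ⟨htv, hts⟩ := hrestfacts t ht
      rw [abs_sval]
      calc |pval r Q t.2| ≤ (r:ℤ) * Q ^ (scaleOf t.2) := abs_pval_le hr hWB hBQ h2Q htv
      _ ≤ (r:ℤ) * Q ^ (J-1) := by
          have h := pow_le_pow_right₀ h1Q' hts
          nlinarith
    -- the recursion helper
    have recurse : msum r Q Mtop = 0 →
        msum r Q M = 0 ∨ ∃ x : ℤ, 0 < x ∧ x ∉ W ∧ (msum r Q M = x ∨ msum r Q M = -x) := by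
      intro htop0
      have hMM : msum r Q M = msum r Q Mrest := by rw [hsum, htop0, zero_add]
      have := IH Mrest.card (by omega) Mrest rfl (by omega)
        (fun t ht => (hrestfacts t ht).1)
        (by rw [← hMM]; exact habs)
      rw [hMM]; exact this
    -- the value of MU
    have hMUval : ∀ t ∈ MU, sval r Q t = sgn t * Q ^ J := by
      intro t ht
      obtain ⟨⟨j, hj⟩, htJ⟩ := hMUfacts t ht
      rw [hj] at htJ
      rw [sval, pval, hj]
      simp only [mcoef, spart, one_mul, add_zero]
      rw [show scaleOf (PT.U j) = j from rfl] at htJ ⊢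
      rw [htJ]
    have hmsumMU : msum r Q MU = scount MU * Q ^ J := by
      rw [msum, Multiset.map_congr rfl hMUval, scount]
      rw [← Multiset.sum_map_mul_right]
    -- the μ = 0 bound, uniform
    have keybound : ∀ (a w₀ μ : ℤ), |a| ≤ (MW.card : ℤ) → |w₀| ≤ Q ^ (J-1) →
        msum r Q M = μ * Q ^ J + a * w₀ + msum r Q Mrest → μ = 0 := by
      intro a w₀ μ ha hw hrel
      have habs3 : ∀ x y : ℤ, |x - y| ≤ |x| + |y| := fun x y => by
        calc |x - y| = |x + (-y)| := by ring_nf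
        _ ≤ |x| + |-y| := abs_add_le _ _
        _ = |x| + |y| := by rw [abs_neg]
      have hcWR : ((MW.card : ℤ)) + (Mrest.card : ℤ) ≤ (r:ℤ) - 1 := by
        have h1 : MW.card + Mrest.card ≤ n := by omega
        have h2 : ((MW.card + Mrest.card : ℕ) : ℤ) ≤ (n:ℤ) := by exact_mod_cast h1
        push_cast at h2
        have h3 : (n:ℤ) ≤ (r:ℤ) - 1 := by omega
        omega
      have e1 : μ * Q ^ J = msum r Q M - a * w₀ - msum r Q Mrest := by linarith
      have e2 : |μ * Q ^ J| ≤ |msum r Q M| + |a * w₀| + |msum r Q Mrest| := by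
        rw [e1]
        calc |msum r Q M - a * w₀ - msum r Q Mrest|
            ≤ |msum r Q M - a * w₀| + |msum r Q Mrest| := habs3 _ _
        _ ≤ |msum r Q M| + |a * w₀| + |msum r Q Mrest| := by
            have := habs3 (msum r Q M) (a * w₀)
            linarith
      have e3 : |a * w₀| ≤ (MW.card : ℤ) * Q ^ (J-1) := by
        rw [abs_mul]
        have h0a : 0 ≤ |a| := abs_nonneg a
        have h0w : 0 ≤ |w₀| := abs_nonneg w₀
        nlinarith
      have e4 : |μ * Q ^ J| ≤ B + ((MW.card : ℤ) + (Mrest.card : ℤ) * (r:ℤ)) * Q ^ (J-1) := by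
        have := hrest_bound
        nlinarith
      have e5 : ((MW.card : ℤ) + (Mrest.card : ℤ) * (r:ℤ)) ≤ ((r:ℤ) - 1) * (r:ℤ) := by
        have h1 : (0:ℤ) ≤ (MW.card : ℤ) := by positivity
        have h2 : (0:ℤ) ≤ (Mrest.card : ℤ) := by positivity
        nlinarith
      have e6 : |μ * Q ^ J| < Q ^ J := by
        have h7 : B + ((r:ℤ) - 1) * (r:ℤ) * Q ^ (J-1) < Q * Q ^ (J-1) := by
          have hBB : B ≤ B * Q ^ (J-1) := by nlinarith
          nlinarith
        calc |μ * Q ^ J| ≤ B + ((MW.card : ℤ) + (Mrest.card : ℤ) * (r:ℤ)) * Q ^ (J-1) := e4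
        _ ≤ B + ((r:ℤ) - 1) * (r:ℤ) * Q ^ (J-1) := by nlinarith
        _ < Q * Q ^ (J-1) := h7
        _ = Q ^ J := hQJ.symm
      have e7 : |μ| * Q ^ J < 1 * Q ^ J := by
        rw [abs_mul, abs_of_nonneg (le_of_lt hQJpos)] at e6
        linarith
      have e8 : |μ| < 1 := lt_of_mul_lt_mul_right e7 (le_of_lt hQJpos)
      have e9 : |μ| ≤ 0 := by omega
      exact abs_eq_zero.1 (le_antisymm e9 (abs_nonneg μ))
    rcases eq_or_ne MW 0 with hMW0 | hMWne
    · -- no special shapes at the top: everything cancels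
      apply recurse
      have h1 : msum r Q Mtop = scount MU * Q ^ J := by
        rw [← hUWsplit, hMW0, add_zero, hmsumMU]
      have h2 : msum r Q M = scount MU * Q ^ J + (0:ℤ) * 0 + msum r Q Mrest := by
        rw [hsum, h1]; ring
      have hz1 : |(0:ℤ)| ≤ (MW.card : ℤ) := by rw [abs_zero]; exact Int.natCast_nonneg _
      have hz2 : |(0:ℤ)| ≤ Q ^ (J-1) := by rw [abs_zero]; exact le_of_lt hQJ1pos
      have hμ := keybound 0 0 (scount MU) hz1 hz2 h2
      rw [h1, hμ, zero_mul]
    · obtain ⟨t₂, ht₂⟩ := Multiset.exists_mem_of_ne_zero hMWne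
      obtain ⟨ht₂notU, ht₂J, ht₂valid⟩ := hMWfacts t₂ ht₂
      rcases Nat.even_or_odd J with hJeven | hJodd
      · -- even scale: the special shape is V w₀ with w₀ ∈ W
        have hJmod : J % 2 = 0 := Nat.even_iff.1 hJeven
        have ht₂notC : ¬ isC t₂.2 = true := by
          intro hc
          obtain ⟨x, hx⟩ := isC_iff.1 hc
          rw [hx] at ht₂J
          simp only [scaleOf] at ht₂J
          omega
        obtain ⟨w₀, hw₀⟩ := shape_V ht₂notU ht₂notC
        have hw₀W : w₀ ∈ W := by
          have := ht₂valid; rw [hw₀] at this; exact this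
        have hw₀J : 2 * w₀.toNat = J := by
          rw [hw₀] at ht₂J; exact ht₂J
        have hw₀pos : 0 < w₀ := (hWB w₀ hw₀W).1
        have hMWval : ∀ t ∈ MW, sval r Q t = sgn t * (((r:ℤ)-1) * Q ^ J + w₀) := by
          intro t ht
          obtain ⟨hnotU, htJ, htvalid⟩ := hMWfacts t ht
          have hnotC : ¬ isC t.2 = true := by
            intro hc
            obtain ⟨x, hx⟩ := isC_iff.1 hc
            rw [hx] at htJ
            simp only [scaleOf] at htJ
            omega
          obtain ⟨w', hw'⟩ := shape_V hnotU hnotC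
          have hw'W : w' ∈ W := by rw [hw'] at htvalid; exact htvalid
          have hw'pos : 0 < w' := (hWB w' hw'W).1
          have hw'J : 2 * w'.toNat = J := by rw [hw'] at htJ; exact htJ
          have hww : w' = w₀ := by omega
          rw [sval, hw', hww, pval]
          simp only [mcoef, spart, scaleOf]
          rw [hw₀J]
        have hmsumMW : msum r Q MW = scount MW * (((r:ℤ)-1) * Q ^ J + w₀) := by
          rw [msum, Multiset.map_congr rfl hMWval, scount]
          rw [← Multiset.sum_map_mul_right]
        obtain ⟨a, hadef⟩ : ∃ z : ℤ, scount MW = z := ⟨_, rfl⟩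
        obtain ⟨b, hbdef⟩ : ∃ z : ℤ, scount MU = z := ⟨_, rfl⟩
        rw [hadef] at hmsumMW
        rw [hbdef] at hmsumMU
        have haZ : |a| ≤ (MW.card : ℤ) := hadef ▸ abs_scount_le MW
        have hbZ : |b| ≤ (MU.card : ℤ) := hbdef ▸ abs_scount_le MU
        have hrel : msum r Q M =
            (b + a * ((r:ℤ)-1)) * Q ^ J + a * w₀ + msum r Q Mrest := by
          rw [hsum, ← hUWsplit, msum_add, hmsumMU, hmsumMW]
          ring
        have hw₀b : |w₀| ≤ Q ^ (J-1) := by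
          rw [abs_of_pos hw₀pos]
          calc w₀ ≤ B := (hWB w₀ hw₀W).2
          _ ≤ Q ^ (J-1) := hBQJ
        have hμ := keybound a w₀ (b + a * ((r:ℤ)-1)) haZ hw₀b hrel
        have h5 : (MU.card : ℤ) + (MW.card : ℤ) ≤ (r:ℤ) - 1 := by
          have h0 : (0:ℤ) ≤ (Mrest.card:ℤ) := Int.natCast_nonneg _
          linarith [hcardsZ, hcardUWZ, hnZ]
        have ha0 : a = 0 := arith_a0 hrZ hμ haZ hbZ h5
        apply recurse
        have hb0 : b = 0 := by
          rw [ha0, zero_mul, add_zero] at hμ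
          exact hμ
        rw [← hUWsplit, msum_add, hmsumMU, hmsumMW, ha0, hb0]
        ring
      · -- odd scale: the special shape is C x₀
        have hJmod : J % 2 = 1 := Nat.odd_iff.1 hJodd
        have ht₂C : isC t₂.2 = true := by
          by_contra hc
          obtain ⟨w', hw'⟩ := shape_V ht₂notU hc
          rw [hw'] at ht₂J
          simp only [scaleOf] at ht₂J
          omega
        obtain ⟨x₀, hx₀⟩ := isC_iff.1 ht₂C
        have hx₀v : 0 < x₀ ∧ x₀ ∉ W := by
          have := ht₂valid; rw [hx₀] at this; exact this
        have hx₀J : 2 * x₀.toNat + 1 = J := by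
          rw [hx₀] at ht₂J; exact ht₂J
        have hMWval : ∀ t ∈ MW, sval r Q t = sgn t * (((r:ℤ)-2) * Q ^ J + x₀) := by
          intro t ht
          obtain ⟨hnotU, htJ, htvalid⟩ := hMWfacts t ht
          have htC : isC t.2 = true := by
            by_contra hc
            obtain ⟨w', hw'⟩ := shape_V hnotU hc
            rw [hw'] at htJ
            simp only [scaleOf] at htJ
            omega
          obtain ⟨x', hx'⟩ := isC_iff.1 htC
          have hx'v : 0 < x' ∧ x' ∉ W := by rw [hx'] at htvalid; exact htvalid
          have hx'J : 2 * x'.toNat + 1 = J := by rw [hx'] at htJ; exact htJ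
          have hxx : x' = x₀ := by
            have h1 := hx₀v.1
            have h2 := hx'v.1
            omega
          rw [sval, hx', hxx, pval]
          simp only [mcoef, spart, scaleOf]
          rw [hx₀J]
        have hmsumMW : msum r Q MW = scount MW * (((r:ℤ)-2) * Q ^ J + x₀) := by
          rw [msum, Multiset.map_congr rfl hMWval, scount]
          rw [← Multiset.sum_map_mul_right]
        obtain ⟨a, hadef⟩ : ∃ z : ℤ, scount MW = z := ⟨_, rfl⟩
        obtain ⟨b, hbdef⟩ : ∃ z : ℤ, scount MU = z := ⟨_, rfl⟩
        rw [hadef] at hmsumMW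
        rw [hbdef] at hmsumMU
        have haZ : |a| ≤ (MW.card : ℤ) := hadef ▸ abs_scount_le MW
        have hbZ : |b| ≤ (MU.card : ℤ) := hbdef ▸ abs_scount_le MU
        have hrel : msum r Q M =
            (b + a * ((r:ℤ)-2)) * Q ^ J + a * x₀ + msum r Q Mrest := by
          rw [hsum, ← hUWsplit, msum_add, hmsumMU, hmsumMW]
          ring
        have hx₀b : |x₀| ≤ Q ^ (J-1) := by
          have hsp := abs_spart_le hWB hBQ h2Q (W := W) (p := PT.C x₀) hx₀v
          simp only [spart, scaleOf] at hsp
          have hJJ : 2 * x₀.toNat + 1 - 1 = J - 1 := by omega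
          rw [hJJ] at hsp
          exact hsp
        have hμ := keybound a x₀ (b + a * ((r:ℤ)-2)) haZ hx₀b hrel
        rcases eq_or_ne a 0 with ha0 | hane
        · apply recurse
          have hb0 : b = 0 := by
            rw [ha0, zero_mul, add_zero] at hμ
            exact hμ
          rw [← hUWsplit, msum_add, hmsumMU, hmsumMW, ha0, hb0]
          ring
        · -- the interesting case: the full budget is used, the sum is ± x₀
          obtain ⟨ha1, hrest0⟩ := arith_odd hrZ hane hμ haZ hbZ hcardUWZ hcardsZ hnZ
            (Int.natCast_nonneg _) (Int.natCast_nonneg _) (Int.natCast_nonneg _)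
          have hMrest0 : Mrest = 0 := by
            have h : Mrest.card = 0 := by exact_mod_cast hrest0
            exact Multiset.card_eq_zero.1 h
          have hmsum_rest : msum r Q Mrest = 0 := by rw [hMrest0]; simp [msum]
          have hfinal : msum r Q M = a * x₀ := by
            rw [hrel, hμ, hmsum_rest]; ring
          right
          refine ⟨x₀, hx₀v.1, hx₀v.2, ?_⟩
          rcases (abs_eq (by norm_num : (0:ℤ) ≤ 1)).1 ha1 with ha | ha
          · left; rw [hfinal, ha, one_mul]
          · right; rw [hfinal, ha]; ring

lemma neg_rep {A : Set ℤ} {x : ℤ} (l : List ℤ) (hmem : ∀ g ∈ l, g ∈ A ∪ -A) (hsum : l.sum = x) :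
    ∃ l' : List ℤ, l'.length = l.length ∧ (∀ g ∈ l', g ∈ A ∪ -A) ∧ l'.sum = -x := by
  refine ⟨l.map (fun g => -g), by simp, ?_, ?_⟩
  · intro g hg
    obtain ⟨g₀, hg₀, rfl⟩ := List.mem_map.1 hg
    rcases hmem g₀ hg₀ with h | h
    · right; rwa [Set.mem_neg, neg_neg]
    · left; rwa [Set.mem_neg] at h
  · have hneg : ∀ L : List ℤ, (L.map (fun g => -g)).sum = -L.sum := by
      intro L
      induction L with
      | nil => simp
      | cons a t ih => simp [ih]; ring
    rw [hneg, hsum]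

lemma mem_A_pow (hQ : Q = B + (r:ℤ)^2) {k : ℕ} (hk : 2 ≤ k) : Q ^ k ∈ theA W r Q := by
  refine ⟨PT.U k, hk, ?_⟩
  simp [pval, mcoef, spart, scaleOf]

lemma rep_w (hr : 2 ≤ r) (hWB : ∀ w ∈ W, 0 < w ∧ w ≤ B) {w : ℤ} (hw : w ∈ W) :
    ∃ l : List ℤ, l.length = r ∧ (∀ g ∈ l, g ∈ theA W r Q ∪ -(theA W r Q)) ∧ l.sum = w := by
  have hw0 : 0 < w := (hWB w hw).1
  refine ⟨pval r Q (PT.V w) :: List.replicate (r-1) (-(Q ^ (2*w.toNat))), ?_, ?_, ?_⟩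
  · simp only [List.length_cons, List.length_replicate]
    omega
  · intro g hg
    rcases List.mem_cons.1 hg with rfl | hg
    · exact Or.inl ⟨PT.V w, hw, rfl⟩
    · have hge := List.eq_of_mem_replicate hg
      rw [hge]
      right
      rw [Set.mem_neg, neg_neg]
      refine ⟨PT.U (2*w.toNat), by simp only [pvalid]; omega, ?_⟩
      simp [pval, mcoef, spart, scaleOf]
  · simp only [List.sum_cons, List.sum_replicate, nsmul_eq_mul, pval, mcoef, spart, scaleOf]
    rw [Nat.cast_sub (by omega : 1 ≤ r)]
    push_cast
    ring

lemma rep_x (hr : 2 ≤ r) {x : ℤ} (hx : 0 < x) (hxW : x ∉ W) :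
    ∃ l : List ℤ, l.length = r - 1 ∧ (∀ g ∈ l, g ∈ theA W r Q ∪ -(theA W r Q)) ∧ l.sum = x := by
  refine ⟨pval r Q (PT.C x) :: List.replicate (r-2) (-(Q ^ (2*x.toNat+1))), ?_, ?_, ?_⟩
  · simp only [List.length_cons, List.length_replicate]
    omega
  · intro g hg
    rcases List.mem_cons.1 hg with rfl | hg
    · exact Or.inl ⟨PT.C x, ⟨hx, hxW⟩, rfl⟩
    · have hge := List.eq_of_mem_replicate hg
      rw [hge]
      right
      rw [Set.mem_neg, neg_neg]
      refine ⟨PT.U (2*x.toNat+1), by simp only [pvalid]; omega, ?_⟩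
      simp [pval, mcoef, spart, scaleOf]
  · simp only [List.sum_cons, List.sum_replicate, nsmul_eq_mul, pval, mcoef, spart, scaleOf]
    rw [Nat.cast_sub (by omega : 2 ≤ r)]
    push_cast
    ring

lemma list_to_mult :
    ∀ l : List ℤ, (∀ g ∈ l, g ∈ theA W r Q ∪ (-(theA W r Q))) →
    ∃ M : Multiset (Bool × PT), M.card = l.length ∧ (∀ t ∈ M, pvalid W t.2) ∧
      msum r Q M = l.sum := by
  intro l
  induction l with
  | nil => exact fun _ => ⟨0, by simp, by simp, by simp [msum]⟩
  | cons g l ih =>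
    intro h
    obtain ⟨M, hc, hv, hs⟩ := ih (fun y hy => h y (List.mem_cons_of_mem _ hy))
    rcases h g List.mem_cons_self with hg | hg
    · obtain ⟨p, hp, hpv⟩ := hg
      refine ⟨(true, p) ::ₘ M, by simp [hc], ?_, ?_⟩
      · intro t ht
        rcases Multiset.mem_cons.1 ht with rfl | ht
        · exact hp
        · exact hv t ht
      · simp only [msum, Multiset.map_cons, Multiset.sum_cons, List.sum_cons]
        rw [show sval r Q (true, p) = pval r Q p by simp [sval, sgn], hpv]
        rw [show (Multiset.map (sval r Q) M).sum = msum r Q M from rfl, hs]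
    · rw [Set.mem_neg] at hg
      obtain ⟨p, hp, hpv⟩ := hg
      refine ⟨(false, p) ::ₘ M, by simp [hc], ?_, ?_⟩
      · intro t ht
        rcases Multiset.mem_cons.1 ht with rfl | ht
        · exact hp
        · exact hv t ht
      · simp only [msum, Multiset.map_cons, Multiset.sum_cons, List.sum_cons]
        rw [show sval r Q (false, p) = -(pval r Q p) by simp [sval, sgn], hpv]
        rw [show (Multiset.map (sval r Q) M).sum = msum r Q M from rfl, hs]
        ring

lemma no_short (hr : 2 ≤ r) (hB : 1 ≤ B) (hWB : ∀ w ∈ W, 0 < w ∧ w ≤ B)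
    (hQ : Q = B + (r:ℤ)^2) {x : ℤ} (hx : x ∈ W ∪ (-W)) :
    ∀ l : List ℤ, (∀ g ∈ l, g ∈ theA W r Q ∪ -(theA W r Q)) → l.sum = x → r ≤ l.length := by
  intro l hl hsum
  by_contra hcon
  push_neg at hcon
  obtain ⟨M, hc, hv, hs⟩ := list_to_mult l hl
  have hxx : 0 < x ∧ x ≤ B ∨ 0 < -x ∧ -x ≤ B := by
    rcases hx with hx | hx
    · exact Or.inl (hWB x hx)
    · rw [Set.mem_neg] at hx
      exact Or.inr (hWB (-x) hx)
  have habs : |msum r Q M| ≤ B := by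
    rw [hs, hsum]
    rcases hxx with ⟨h1, h2⟩ | ⟨h1, h2⟩
    · rw [abs_of_pos h1]; exact h2
    · rw [abs_of_neg (by linarith)]; exact h2
  have hcore := core hr hB hWB hQ l.length M (by omega) (by omega) hv habs
  rw [hs, hsum] at hcore
  rcases hcore with h0 | ⟨x₀, hx₀pos, hx₀W, hor⟩
  · rcases hxx with ⟨h1, _⟩ | ⟨h1, _⟩ <;> omega
  · rcases hx with hx | hx
    · rcases hor with rfl | rfl
      · exact hx₀W hx
      · rcases hWB _ hx with ⟨h1, _⟩
        omega
    · rw [Set.mem_neg] at hx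
      rcases hor with rfl | rfl
      · rcases hWB _ hx with ⟨h1, _⟩
        omega
      · rw [neg_neg] at hx
        exact hx₀W hx

lemma wl_w (hr : 2 ≤ r) (hB : 1 ≤ B) (hWB : ∀ w ∈ W, 0 < w ∧ w ≤ B)
    (hQ : Q = B + (r:ℤ)^2) {w : ℤ} (hw : w ∈ W ∪ (-W)) :
    addWordLength (theA W r Q) w = r := by
  have hrep : ∃ l : List ℤ, l.length = r ∧
      (∀ g ∈ l, g ∈ theA W r Q ∪ -(theA W r Q)) ∧ l.sum = w := by
    rcases hw with hw' | hw'
    · exact rep_w hr hWB hw'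
    · rw [Set.mem_neg] at hw'
      obtain ⟨l, hlen, hmem, hsum⟩ := rep_w (Q := Q) hr hWB hw'
      obtain ⟨l', h1, h2, h3⟩ := neg_rep l hmem hsum
      refine ⟨l', by omega, h2, by rw [h3]; ring⟩
  obtain ⟨l, hlen, hmem, hsum⟩ := hrep
  apply le_antisymm
  · exact Nat.sInf_le ⟨l, hlen, hmem, hsum⟩
  · have hrS : r ∈ {n : ℕ | ∃ l : List ℤ, l.length = n ∧
        (∀ g ∈ l, g ∈ theA W r Q ∪ -(theA W r Q)) ∧ l.sum = w} := ⟨l, hlen, hmem, hsum⟩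
    apply le_csInf ⟨r, hrS⟩
    rintro m ⟨l', hlen', hmem', hsum'⟩
    rw [← hlen']
    exact no_short hr hB hWB hQ hw l' hmem' hsum'

lemma wl_other (hr : 2 ≤ r) {x : ℤ} (hx : x ∉ W ∪ (-W)) (hx0 : x ≠ 0) :
    addWordLength (theA W r Q) x ≤ r - 1 := by
  have hxW : x ∉ W := fun h => hx (Or.inl h)
  have hxnW : -x ∉ W := fun h => hx (Or.inr (by rwa [Set.mem_neg]))
  have hrep : ∃ l : List ℤ, l.length = r - 1 ∧
      (∀ g ∈ l, g ∈ theA W r Q ∪ -(theA W r Q)) ∧ l.sum = x := by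
    rcases lt_or_gt_of_ne hx0 with hneg | hpos
    · obtain ⟨l, hlen, hmem, hsum⟩ := rep_x (Q := Q) hr (by linarith : 0 < -x) hxnW
      obtain ⟨l', h1, h2, h3⟩ := neg_rep l hmem hsum
      refine ⟨l', by omega, h2, by rw [h3]; ring⟩
    · exact rep_x hr hpos hxW
  obtain ⟨l, hlen, hmem, hsum⟩ := hrep
  exact Nat.sInf_le ⟨l, hlen, hmem, hsum⟩

lemma wl_zero : addWordLength (theA W r Q) 0 = 0 := by
  apply le_antisymm _ (Nat.zero_le _)
  apply Nat.sInf_le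
  exact ⟨[], rfl, by simp, rfl⟩

end Lemmas
end PF18

theorem stmt18 (r s : ℕ) (hr : 2 ≤ r) (hs : 0 < s) (hse : Even s)
    (W : Set ℤ) (hWpos : W ⊆ {n : ℤ | 0 < n}) (hWfin : W.Finite)
    (hWcard : W.ncard = s / 2) :
    ∃ A : Set ℤ, A.Infinite ∧ A ⊆ {n : ℤ | 0 < n} ∧
      AddSubgroup.closure A = ⊤ ∧
      {x : ℤ | addWordLength A x = r} = W ∪ (-W) ∧
      (∀ r' : ℕ, r < r' → {x : ℤ | addWordLength A x = r'} = ∅) ∧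
      Nat.card {x : ℤ | addWordLength A x = r} = s := by
  classical
  obtain ⟨B₀, hB₀⟩ := hWfin.bddAbove
  set B : ℤ := max B₀ 1 with hBdef
  have hB1 : (1:ℤ) ≤ B := le_max_right _ _
  have hWB : ∀ w ∈ W, 0 < w ∧ w ≤ B := fun w hw =>
    ⟨hWpos hw, le_trans (hB₀ hw) (le_max_left _ _)⟩
  set Q : ℤ := B + (r:ℤ)^2 with hQdef
  have hQ : Q = B + (r:ℤ)^2 := hQdef
  have hrZ : (2:ℤ) ≤ (r:ℤ) := by exact_mod_cast hr
  have h2Q : (2:ℤ) ≤ Q := by nlinarith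
  have h1Q : (1:ℤ) < Q := by linarith
  -- word length facts
  have hwlw : ∀ w ∈ W ∪ (-W), addWordLength (PF18.theA W r Q) w = r :=
    fun w hw => PF18.wl_w hr hB1 hWB hQ hw
  have hwlx : ∀ x : ℤ, x ∉ W ∪ (-W) → x ≠ 0 →
      addWordLength (PF18.theA W r Q) x ≤ r - 1 :=
    fun x hx hx0 => PF18.wl_other hr hx hx0
  have hwl0 : addWordLength (PF18.theA W r Q) 0 = 0 := PF18.wl_zero
  have hSr : {x : ℤ | addWordLength (PF18.theA W r Q) x = r} = W ∪ (-W) := by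
    ext x
    simp only [Set.mem_setOf_eq]
    constructor
    · intro hx
      by_contra hxW
      rcases eq_or_ne x 0 with rfl | hx0
      · rw [hwl0] at hx; omega
      · have := hwlx x hxW hx0; omega
    · intro hx
      exact hwlw x hx
  have hle : ∀ x : ℤ, addWordLength (PF18.theA W r Q) x ≤ r := by
    intro x
    by_cases hx : x ∈ W ∪ (-W)
    · rw [hwlw x hx]
    · rcases eq_or_ne x 0 with rfl | hx0
      · rw [hwl0]; omega
      · have := hwlx x hx hx0; omega
  refine ⟨PF18.theA W r Q, ?_, ?_, ?_, hSr, ?_, ?_⟩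
  · -- infinite
    apply Set.infinite_of_injective_forall_mem (f := fun j : ℕ => Q ^ (j+2))
    · have hmono : StrictMono (fun j : ℕ => Q ^ (j+2)) := fun a b h => by
        apply pow_lt_pow_right₀ h1Q
        omega
      exact hmono.injective
    · exact fun j => PF18.mem_A_pow hQ (by omega)
  · -- positive
    rintro z ⟨p, hp, rfl⟩
    exact PF18.pval_pos hr (fun w hw => (hWB w hw).1) h2Q hp
  · -- closure
    have h1mem : (1:ℤ) ∈ AddSubgroup.closure (PF18.theA W r Q) := by
      have hrep : ∃ l : List ℤ, (∀ g ∈ l, g ∈ PF18.theA W r Q ∪ -(PF18.theA W r Q)) ∧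
          l.sum = 1 := by
        by_cases h1W : (1:ℤ) ∈ W
        · obtain ⟨l, _, hm, hsum⟩ := PF18.rep_w (Q := Q) hr hWB h1W
          exact ⟨l, hm, hsum⟩
        · obtain ⟨l, _, hm, hsum⟩ := PF18.rep_x (Q := Q) hr one_pos h1W
          exact ⟨l, hm, hsum⟩
      obtain ⟨l, hm, hsum⟩ := hrep
      rw [← hsum]
      apply AddSubgroup.list_sum_mem
      intro g hg
      rcases hm g hg with h | h
      · exact AddSubgroup.subset_closure h
      · rw [Set.mem_neg] at h
        have hmem := AddSubgroup.subset_closure h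
        rw [show g = -(-g) by ring]
        exact AddSubgroup.neg_mem _ hmem
    rw [AddSubgroup.eq_top_iff']
    intro z
    have hz := AddSubgroup.zsmul_mem _ h1mem z
    simpa using hz
  · -- no longer lengths
    intro r' hr'
    ext x
    simp only [Set.mem_setOf_eq, Set.mem_empty_iff_false, iff_false]
    intro hx
    have := hle x
    omega
  · -- cardinality
    have hnegW : (-W) = (fun z : ℤ => -z) '' W := by
      ext z
      constructor
      · intro hz
        rw [Set.mem_neg] at hz
        exact ⟨-z, hz, by ring⟩
      · rintro ⟨y, hy, rfl⟩
        rw [Set.mem_neg, neg_neg]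
        exact hy
    have hfinneg : (-W).Finite := by
      rw [hnegW]; exact hWfin.image _
    have hdisj : Disjoint W (-W) := by
      rw [Set.disjoint_left]
      intro z hz hz'
      have h1 : 0 < z := hWpos hz
      rw [Set.mem_neg] at hz'
      have h2 : 0 < -z := hWpos hz'
      omega
    have hcard2 : (-W).ncard = W.ncard := by
      rw [hnegW]
      exact Set.ncard_image_of_injective _ neg_injective
    obtain ⟨c, rfl⟩ := hse
    have hc : W.ncard = c := by omega
    calc Nat.card {x : ℤ | addWordLength (PF18.theA W r Q) x = (r:ℕ)}
        = {x : ℤ | addWordLength (PF18.theA W r Q) x = (r:ℕ)}.ncard :=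
          Nat.card_coe_set_eq _
    _ = (W ∪ (-W)).ncard := by rw [hSr]
    _ = W.ncard + (-W).ncard := Set.ncard_union_eq hdisj hWfin hfinneg
    _ = c + c := by rw [hcard2, hc]
end

section
/- Let s be a positive odd integer, t = (s+1)/2, and in the additive group ℤ × (ℤ/2ℤ) let A_s = {(k, 0̄) : k ≥ 1} ∪ {(k, 1̄) : k ≥ t}. Then A_s generates ℤ × (ℤ/2ℤ) and has phase transition (2, s), with transition set {(k, 1̄) : |k| ≤ t − 1} (which has s elements). -/
theorem stmt19 (s : ℕ) (hs : 0 < s) (hodd : Odd s) (t : ℕ) (ht : t = (s + 1) / 2)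
    (A : Set (ℤ × ZMod 2))
    (hA : A = {x : ℤ × ZMod 2 | ∃ k : ℤ, 1 ≤ k ∧ x = (k, (0 : ZMod 2))} ∪
              {x : ℤ × ZMod 2 | ∃ k : ℤ, (t : ℤ) ≤ k ∧ x = (k, (1 : ZMod 2))}) :
    AddSubgroup.closure A = ⊤ ∧
    {x : ℤ × ZMod 2 | addWordLength A x = 2} =
      {x : ℤ × ZMod 2 | ∃ k : ℤ, |k| ≤ (t : ℤ) - 1 ∧ x = (k, (1 : ZMod 2))} ∧
    (∀ r : ℕ, 2 < r → {x : ℤ × ZMod 2 | addWordLength A x = r} = ∅) ∧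
    Nat.card {x : ℤ × ZMod 2 | addWordLength A x = 2} = s := by
  obtain ⟨m, hm⟩ := hodd
  have htm : t = m + 1 := by omega
  subst hA
  set A : Set (ℤ × ZMod 2) :=
    {x : ℤ × ZMod 2 | ∃ k : ℤ, 1 ≤ k ∧ x = (k, (0 : ZMod 2))} ∪
    {x : ℤ × ZMod 2 | ∃ k : ℤ, (t : ℤ) ≤ k ∧ x = (k, (1 : ZMod 2))} with hA
  -- membership facts
  have hneg1 : ∀ k : ℤ, -((k, (1:ZMod 2))) = (-k, (1:ZMod 2)) := by
    intro k; simp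
  have hmem0 : ∀ k : ℤ, k ≠ 0 → (k, (0:ZMod 2)) ∈ A ∪ -A := by
    intro k hk
    rcases lt_or_gt_of_ne hk with h | h
    · exact Or.inr (by
        rw [Set.mem_neg]
        exact Or.inl ⟨-k, by omega, by simp⟩)
    · exact Or.inl (Or.inl ⟨k, by omega, rfl⟩)
  have hmem1 : ∀ k : ℤ, (t:ℤ) ≤ |k| → (k, (1:ZMod 2)) ∈ A ∪ -A := by
    intro k hk
    rcases le_or_gt (t:ℤ) k with h | h
    · exact Or.inl (Or.inr ⟨k, h, rfl⟩)
    · refine Or.inr ?_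
      rw [Set.mem_neg, hneg1]
      have hk' : (t:ℤ) ≤ -k := by rcases abs_cases k with ⟨h1, h2⟩ | ⟨h1, h2⟩ <;> omega
      exact Or.inr ⟨-k, hk', rfl⟩
  have hle : ∀ (x : ℤ × ZMod 2) (l : List (ℤ × ZMod 2)),
      (∀ g ∈ l, g ∈ A ∪ -A) → l.sum = x → addWordLength A x ≤ l.length :=
    fun x l h1 h2 => Nat.sInf_le ⟨l, rfl, h1, h2⟩
  -- every element is a sum of a word of length ≤ 2
  have hex : ∀ x : ℤ × ZMod 2, ∃ l : List (ℤ × ZMod 2),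
      l.length ≤ 2 ∧ (∀ g ∈ l, g ∈ A ∪ -A) ∧ l.sum = x := by
    rintro ⟨k, c⟩
    fin_cases c
    · by_cases hk : k = 0
      · subst hk
        exact ⟨[], by simp; rfl⟩
      · exact ⟨[(k, (0:ZMod 2))], by norm_num,
          by intro g hg; simp at hg; subst hg; exact hmem0 k hk, by simp; rfl⟩
    · show ∃ l : List (ℤ × ZMod 2), l.length ≤ 2 ∧ (∀ g ∈ l, g ∈ A ∪ -A) ∧ l.sum = (k, (1:ZMod 2))
      by_cases hk : k = t
      · subst hk
        refine ⟨[((t:ℤ), (1:ZMod 2))], by norm_num, ?_, by simp⟩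
        intro g hg; simp at hg; subst hg
        exact Or.inl (Or.inr ⟨t, le_refl _, rfl⟩)
      · refine ⟨[(k - t, (0:ZMod 2)), ((t:ℤ), (1:ZMod 2))], by norm_num, ?_, ?_⟩
        · intro g hg
          simp only [List.mem_cons, List.mem_singleton, List.not_mem_nil, or_false] at hg
          rcases hg with rfl | rfl
          · exact hmem0 _ (by omega)
          · exact Or.inl (Or.inr ⟨t, le_refl _, rfl⟩)
        · simp [Prod.ext_iff]
  have hall : ∀ x : ℤ × ZMod 2, addWordLength A x ≤ 2 := by
    intro x
    obtain ⟨l, h1, h2, h3⟩ := hex x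
    exact le_trans (hle x l h2 h3) h1
  -- length 0 characterization : if x ≠ 0 and x ∉ A ∪ -A then 2 ≤ length
  have hge2 : ∀ x : ℤ × ZMod 2, x ≠ 0 → x ∉ A ∪ -A → 2 ≤ addWordLength A x := by
    intro x hx0 hx1
    refine le_csInf ?_ ?_
    · obtain ⟨l, _, h2, h3⟩ := hex x
      exact ⟨l.length, l, rfl, h2, h3⟩
    · rintro n ⟨l, hlen, hmem, hsum⟩
      by_contra hn
      interval_cases n
      · simp [List.length_eq_zero_iff] at hlen
        subst hlen; simp at hsum; exact hx0 hsum.symm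
      · obtain ⟨g, rfl⟩ := List.length_eq_one_iff.mp hlen
        simp at hsum
        subst hsum
        exact hx1 (hmem _ (by simp))
  -- exact values
  have hzmod : ((1:ZMod 2)) ≠ 0 := by decide
  have hv0 : ∀ k : ℤ, addWordLength A (k, (0:ZMod 2)) ≤ 1 := by
    intro k
    by_cases hk : k = 0
    · subst hk
      exact le_trans (hle _ [] (by simp) (by simp; rfl)) (by norm_num)
    · exact hle _ [(k, (0:ZMod 2))]
        (by intro g hg; simp at hg; subst hg; exact hmem0 k hk) (by simp)
  have hv1 : ∀ k : ℤ, (t:ℤ) ≤ |k| → addWordLength A (k, (1:ZMod 2)) ≤ 1 := by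
    intro k hk
    exact hle _ [(k, (1:ZMod 2))]
      (by intro g hg; simp at hg; subst hg; exact hmem1 k hk) (by simp)
  have hnotmem : ∀ k : ℤ, |k| ≤ (t:ℤ) - 1 → (k, (1:ZMod 2)) ∉ A ∪ -A := by
    intro k hk h
    obtain ⟨hk1, hk2⟩ := abs_le.mp hk
    rcases h with h | h
    · rcases h with ⟨j, hj, he⟩ | ⟨j, hj, he⟩
      · rw [Prod.ext_iff] at he
        exact hzmod he.2
      · rw [Prod.ext_iff] at he
        have : k = j := he.1
        omega
    · rw [Set.mem_neg, hneg1] at h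
      rcases h with ⟨j, hj, he⟩ | ⟨j, hj, he⟩
      · rw [Prod.ext_iff] at he
        exact hzmod he.2
      · rw [Prod.ext_iff] at he
        have : -k = j := he.1
        omega
  have hv2 : ∀ k : ℤ, |k| ≤ (t:ℤ) - 1 → addWordLength A (k, (1:ZMod 2)) = 2 := by
    intro k hk
    obtain ⟨hk1, hk2⟩ := abs_le.mp hk
    refine le_antisymm ?_ (hge2 _ (by simp [Prod.ext_iff, hzmod]) (hnotmem k hk))
    refine hle _ [(k - t, (0:ZMod 2)), ((t:ℤ), (1:ZMod 2))] ?_ ?_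
    · intro g hg
      simp only [List.mem_cons, List.mem_singleton, List.not_mem_nil, or_false] at hg
      rcases hg with rfl | rfl
      · exact hmem0 _ (by omega)
      · exact Or.inl (Or.inr ⟨t, le_refl _, rfl⟩)
    · simp [Prod.ext_iff]
  -- the set equality
  have hset : {x : ℤ × ZMod 2 | addWordLength A x = 2} =
      {x : ℤ × ZMod 2 | ∃ k : ℤ, |k| ≤ (t : ℤ) - 1 ∧ x = (k, (1 : ZMod 2))} := by
    ext ⟨k, c⟩
    simp only [Set.mem_setOf_eq]
    have hc : c = 0 ∨ c = 1 := by fin_cases c; exacts [Or.inl rfl, Or.inr rfl]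
    constructor
    · intro h2
      rcases hc with rfl | rfl
      · exact absurd h2 (by have := hv0 k; omega)
      · refine ⟨k, ?_, rfl⟩
        by_contra habs
        have habs' : (t:ℤ) ≤ |k| := by omega
        have := hv1 k habs'
        omega
    · rintro ⟨j, hj, hx⟩
      rw [Prod.ext_iff] at hx
      obtain ⟨rfl, rfl⟩ : k = j ∧ c = 1 := ⟨hx.1, hx.2⟩
      exact hv2 _ hj
  -- closure
  have h1 : ((1:ℤ), (0:ZMod 2)) ∈ AddSubgroup.closure A :=
    AddSubgroup.subset_closure (Or.inl ⟨1, le_refl _, rfl⟩)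
  have h3 : ∀ j : ℤ, ((j, (0:ZMod 2)) : ℤ × ZMod 2) ∈ AddSubgroup.closure A := by
    intro j
    have := AddSubgroup.zsmul_mem _ h1 j
    simpa using this
  have h4 : (((0:ℤ), (1:ZMod 2)) : ℤ × ZMod 2) ∈ AddSubgroup.closure A := by
    have h2 : (((t:ℤ), (1:ZMod 2)) : ℤ × ZMod 2) ∈ AddSubgroup.closure A :=
      AddSubgroup.subset_closure (Or.inr ⟨t, le_refl _, rfl⟩)
    have := AddSubgroup.sub_mem _ h2 (h3 t)
    simpa using this
  have hclos : AddSubgroup.closure A = ⊤ := by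
    rw [eq_top_iff]
    rintro ⟨k, c⟩ -
    have hc : c = 0 ∨ c = 1 := by fin_cases c; exacts [Or.inl rfl, Or.inr rfl]
    rcases hc with rfl | rfl
    · exact h3 k
    · have := AddSubgroup.add_mem _ (h3 k) h4
      simpa using this
  refine ⟨hclos, hset, ?_, ?_⟩
  · intro r hr
    ext x
    simp only [Set.mem_setOf_eq, Set.mem_empty_iff_false, iff_false]
    intro h
    have := hall x
    omega
  · rw [hset]
    have hfin : {x : ℤ × ZMod 2 | ∃ k : ℤ, |k| ≤ (t : ℤ) - 1 ∧ x = (k, (1 : ZMod 2))} =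
        ↑((Finset.Icc (-(t:ℤ) + 1) ((t:ℤ) - 1)).image (fun k => (k, (1:ZMod 2)))) := by
      ext x
      simp only [Set.mem_setOf_eq, Finset.coe_image, Set.mem_image, Finset.mem_coe,
        Finset.mem_Icc]
      constructor
      · rintro ⟨k, hk, rfl⟩
        obtain ⟨hk1, hk2⟩ := abs_le.mp hk
        exact ⟨k, ⟨by omega, by omega⟩, rfl⟩
      · rintro ⟨k, ⟨hk1, hk2⟩, rfl⟩
        exact ⟨k, abs_le.mpr ⟨by omega, by omega⟩, rfl⟩
    rw [hfin, Nat.card_coe_set_eq, Set.ncard_coe_finset,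
      Finset.card_image_of_injective _ (fun a b h => by simpa [Prod.ext_iff] using h),
      Int.card_Icc]
    omega
end
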